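/- arXiv:2009.07229 — 6 statements merged into one kernel-verified Lean document; each statement's English description precedes it below -/
import Mathlib

section
/- Let H be a complex Hilbert space and n, c ≥ 1 integers. Suppose q_{a,ij} ∈ B(H) for 1 ≤ a ≤ c and 1 ≤ i,j ≤ n are such that each matrix Q_a = (q_{a,ij}) acts as a positive operator on the ℓ²-direct sum H^n (via (Q_a ξ)_i = Σ_j q_{a,ij} ξ_j) and Σ_{a=1}^c Q_a is the identity on H^n. Then there exist operators p_{a,ij} ∈ B(H^{(c+1)}) (where H^{(c+1)} is the ℓ²-direct sum of c+1 copies of H) such that each matrix P_a = (p_{a,ij}) is a self-adjoint idempotent operator on (H^{(c+1)})^n, Σ_{a=1}^c P_a is the identity on (H^{(c+1)})^n, and V* p_{a,ij} V = q_{a,ij} for all a, i, j, where V : H → H^{(c+1)} is the isometric embedding onto the first direct summand. -/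
open scoped ENNReal

set_option synthInstance.maxHeartbeats 1000000
set_option maxHeartbeats 1000000

noncomputable section

instance piLpCompleteSpace {ι : Type*} (p : ℝ≥0∞) (β : ι → Type*)
    [∀ i, UniformSpace (β i)] [∀ i, CompleteSpace (β i)] : CompleteSpace (PiLp p β) :=
  (PiLp.uniformEquiv p β).completeSpace_iff.2 inferInstance

/-- The isometric embedding of `E` onto the `i`-th coordinate of the
ℓ²-direct sum of `n` copies of `E`. -/
def inclPi (E : Type*) [NormedAddCommGroup E] [InnerProductSpace ℂ E]
    (n : ℕ) (i : Fin n) : E →L[ℂ] PiLp 2 (fun _ : Fin n => E) :=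
  (PiLp.continuousLinearEquiv 2 ℂ (fun _ : Fin n => E)).symm.toContinuousLinearMap.comp
    (ContinuousLinearMap.pi fun j => if j = i then ContinuousLinearMap.id ℂ E else 0)

/-- The continuous linear projection onto the `i`-th coordinate of the
ℓ²-direct sum of `n` copies of `E`. -/
def projPi (E : Type*) [NormedAddCommGroup E] [InnerProductSpace ℂ E]
    (n : ℕ) (i : Fin n) : PiLp 2 (fun _ : Fin n => E) →L[ℂ] E :=
  (ContinuousLinearMap.proj i).comp
    (PiLp.continuousLinearEquiv 2 ℂ (fun _ : Fin n => E)).toContinuousLinearMap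

/-- The operator on the ℓ²-direct sum `E^n` associated to an `n × n` matrix of bounded
operators on `E`, acting by `(T ξ) i = ∑ j, T i j (ξ j)`. -/
def matToOp {E : Type*} [NormedAddCommGroup E] [InnerProductSpace ℂ E] {n : ℕ}
    (T : Matrix (Fin n) (Fin n) (E →L[ℂ] E)) :
    PiLp 2 (fun _ : Fin n => E) →L[ℂ] PiLp 2 (fun _ : Fin n => E) :=
  ∑ i, ∑ j, (inclPi E n i).comp ((T i j).comp (projPi E n j))


section AuxLemmas

variable {E : Type*} [NormedAddCommGroup E] [InnerProductSpace ℂ E] {n : ℕ}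

lemma inclPi_apply (i j : Fin n) (x : E) : inclPi E n i x j = if j = i then x else 0 := by
  simp [inclPi]; split <;> simp

lemma projPi_apply (i : Fin n) (x : PiLp 2 (fun _ : Fin n => E)) : projPi E n i x = x i := rfl

lemma proj_comp_incl (i j : Fin n) :
    (projPi E n i).comp (inclPi E n j) = if j = i then ContinuousLinearMap.id ℂ E else 0 := by
  ext x
  simp only [ContinuousLinearMap.comp_apply, projPi_apply, inclPi_apply]
  rcases eq_or_ne j i with h | h
  · simp [h]
  · simp [h, Ne.symm h]

lemma sum_incl_comp_proj :
    ∑ i, (inclPi E n i).comp (projPi E n i) = ContinuousLinearMap.id ℂ _ := by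
  ext x j
  simp only [ContinuousLinearMap.sum_apply, ContinuousLinearMap.comp_apply, projPi_apply,
    ContinuousLinearMap.id_apply]
  have : (∑ k, inclPi E n k (x k)) j = projPi E n j (∑ k, inclPi E n k (x k)) := rfl
  rw [this, map_sum]
  simp [inclPi_apply, projPi_apply]

lemma adjoint_inclPi [CompleteSpace E] (i : Fin n) :
    ContinuousLinearMap.adjoint (inclPi E n i) = projPi E n i := by
  symm
  rw [ContinuousLinearMap.eq_adjoint_iff]
  intro x y
  rw [PiLp.inner_apply]
  simp only [projPi_apply, inclPi_apply]
  rw [Finset.sum_eq_single i]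
  · simp
  · intro b _ hb; simp [hb]
  · simp

lemma adjoint_projPi [CompleteSpace E] (i : Fin n) :
    ContinuousLinearMap.adjoint (projPi E n i) = inclPi E n i := by
  rw [← adjoint_inclPi, ContinuousLinearMap.adjoint_adjoint]

lemma piLp_sum_apply {ι : Type*} (s : Finset ι) (f : ι → PiLp 2 (fun _ : Fin n => E))
    (k : Fin n) : (∑ a ∈ s, f a) k = ∑ a ∈ s, f a k :=
  map_sum (projPi E n k) f s

lemma sum_inclPi_apply (x : PiLp 2 (fun _ : Fin n => E)) :
    ∑ j, inclPi E n j (x j) = x := by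
  have := congrArg (fun (S : PiLp 2 (fun _ : Fin n => E) →L[ℂ] PiLp 2 (fun _ : Fin n => E)) => S x)
    (sum_incl_comp_proj (E := E) (n := n))
  simpa [ContinuousLinearMap.sum_apply, projPi_apply] using this

lemma matToOp_one : matToOp (1 : Matrix (Fin n) (Fin n) (E →L[ℂ] E)) = 1 := by
  unfold matToOp
  rw [show (1 : PiLp 2 (fun _ : Fin n => E) →L[ℂ] _) = ContinuousLinearMap.id ℂ _ from rfl,
    ← sum_incl_comp_proj]
  refine Finset.sum_congr rfl fun i _ => ?_
  rw [Finset.sum_eq_single i]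
  · simp [Matrix.one_apply, ContinuousLinearMap.one_def]
  · intro b _ hb
    simp [Matrix.one_apply, Ne.symm hb]
  · simp

lemma matToOp_apply (M : Matrix (Fin n) (Fin n) (E →L[ℂ] E))
    (x : PiLp 2 (fun _ : Fin n => E)) (k : Fin n) :
    matToOp M x k = ∑ j, M k j (x j) := by
  unfold matToOp
  have : (∑ i, ∑ j, (inclPi E n i).comp ((M i j).comp (projPi E n j))) x k
      = projPi E n k ((∑ i, ∑ j, (inclPi E n i).comp ((M i j).comp (projPi E n j))) x) := rfl
  rw [this]
  simp only [ContinuousLinearMap.sum_apply, map_sum, ContinuousLinearMap.comp_apply]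
  rw [Finset.sum_eq_single k]
  · refine Finset.sum_congr rfl fun j _ => ?_
    simp [projPi_apply, inclPi_apply]
  · intro b _ hb
    refine Finset.sum_eq_zero fun j _ => ?_
    simp [projPi_apply, inclPi_apply, Ne.symm hb]
  · simp

lemma matToOp_mul (A B : Matrix (Fin n) (Fin n) (E →L[ℂ] E)) :
    matToOp (A * B) = (matToOp A).comp (matToOp B) := by
  ext x k
  rw [ContinuousLinearMap.comp_apply, matToOp_apply, matToOp_apply]
  simp only [Matrix.mul_apply, ContinuousLinearMap.sum_apply, ContinuousLinearMap.mul_apply]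
  rw [Finset.sum_comm]
  refine Finset.sum_congr rfl fun l _ => ?_
  rw [matToOp_apply, map_sum]

lemma matToOp_sum {ι : Type*} (s : Finset ι) (f : ι → Matrix (Fin n) (Fin n) (E →L[ℂ] E)) :
    matToOp (∑ a ∈ s, f a) = ∑ a ∈ s, matToOp (f a) := by
  ext x k
  rw [matToOp_apply]
  simp only [Matrix.sum_apply, ContinuousLinearMap.sum_apply]
  refine Eq.trans ?_ (piLp_sum_apply s (fun a => matToOp (f a) x) k).symm
  rw [Finset.sum_comm]
  exact Finset.sum_congr rfl fun a _ => (matToOp_apply (f a) x k).symm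

lemma matToOp_star [CompleteSpace E] (A : Matrix (Fin n) (Fin n) (E →L[ℂ] E)) :
    ContinuousLinearMap.adjoint (matToOp A) = matToOp (star A) := by
  unfold matToOp
  rw [map_sum]
  rw [Finset.sum_comm]
  refine Finset.sum_congr rfl fun i _ => ?_
  rw [map_sum]
  refine Finset.sum_congr rfl fun j _ => ?_
  rw [ContinuousLinearMap.adjoint_comp, ContinuousLinearMap.adjoint_comp,
    adjoint_inclPi, adjoint_projPi, ContinuousLinearMap.comp_assoc]
  rfl

lemma comp_matToOp_comp (M : Matrix (Fin n) (Fin n) (E →L[ℂ] E)) (i j : Fin n) :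
    (projPi E n i).comp ((matToOp M).comp (inclPi E n j)) = M i j := by
  ext x
  simp only [ContinuousLinearMap.comp_apply, projPi_apply]
  rw [matToOp_apply]
  rw [Finset.sum_eq_single j]
  · simp [inclPi_apply]
  · intro b _ hb; simp [inclPi_apply, hb]
  · simp

lemma matToOp_compression (T : PiLp 2 (fun _ : Fin n => E) →L[ℂ] PiLp 2 (fun _ : Fin n => E)) :
    matToOp (Matrix.of fun i j => (projPi E n i).comp (T.comp (inclPi E n j))) = T := by
  ext x k
  rw [matToOp_apply]
  simp only [Matrix.of_apply, ContinuousLinearMap.comp_apply, projPi_apply]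
  have h1 : ∑ j, (T (inclPi E n j (x j))) k = (T (∑ j, inclPi E n j (x j))) k := by
    rw [map_sum, piLp_sum_apply]
  rw [h1, sum_inclPi_apply]

end AuxLemmas

section Swap
variable (H : Type*) [NormedAddCommGroup H] [InnerProductSpace ℂ H] (n m : ℕ)

/-- The coordinate-swap operator between iterated ℓ²-direct sums. -/
def swapOp :
    PiLp 2 (fun _ : Fin n => PiLp 2 (fun _ : Fin m => H)) →L[ℂ]
      PiLp 2 (fun _ : Fin m => PiLp 2 (fun _ : Fin n => H)) :=
  ∑ i : Fin n, ∑ s : Fin m,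
    (inclPi (PiLp 2 (fun _ : Fin n => H)) m s).comp ((inclPi H n i).comp
      ((projPi H m s).comp (projPi (PiLp 2 (fun _ : Fin m => H)) n i)))

variable {H n m}

lemma swapOp_apply (x : PiLp 2 (fun _ : Fin n => PiLp 2 (fun _ : Fin m => H)))
    (s : Fin m) (i : Fin n) : swapOp H n m x s i = x i s := by
  set T := fun (i' : Fin n) (s' : Fin m) =>
    (inclPi (PiLp 2 (fun _ : Fin n => H)) m s').comp ((inclPi H n i').comp
      ((projPi H m s').comp (projPi (PiLp 2 (fun _ : Fin m => H)) n i'))) with hT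
  have hterm : ∀ i' s', T i' s' x s i = if s = s' then (if i = i' then x i' s' else 0) else 0 := by
    intro i' s'
    simp only [hT, ContinuousLinearMap.comp_apply, projPi_apply]
    have hz : ((inclPi (PiLp 2 (fun _ : Fin n => H)) m s')
        ((inclPi H n i') (x i' s'))) s i
        = (if s = s' then (inclPi H n i') (x i' s') else 0) i := by
      rw [inclPi_apply]
    rw [hz]
    rcases eq_or_ne s s' with h | h
    · simp only [h, ite_true, eq_self_iff_true]
      rw [inclPi_apply]
    · simp [h]
  have h1 : swapOp H n m x s i = ∑ i', ∑ s', T i' s' x s i := by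
    unfold swapOp
    rw [ContinuousLinearMap.sum_apply, piLp_sum_apply, piLp_sum_apply]
    refine Finset.sum_congr rfl fun i' _ => ?_
    rw [ContinuousLinearMap.sum_apply, piLp_sum_apply, piLp_sum_apply]
  rw [h1]
  simp only [hterm]
  simp [Finset.sum_ite_eq]

lemma swapOp_swapOp (x : PiLp 2 (fun _ : Fin n => PiLp 2 (fun _ : Fin m => H))) :
    swapOp H m n (swapOp H n m x) = x := by
  refine PiLp.ext fun i => PiLp.ext fun s => ?_
  rw [swapOp_apply, swapOp_apply]

lemma adjoint_swapOp [CompleteSpace H] :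
    ContinuousLinearMap.adjoint (swapOp H n m) = swapOp H m n := by
  symm
  rw [ContinuousLinearMap.eq_adjoint_iff]
  intro x y
  rw [PiLp.inner_apply, PiLp.inner_apply]
  simp only [PiLp.inner_apply]
  rw [Finset.sum_comm]
  refine Finset.sum_congr rfl fun i _ => Finset.sum_congr rfl fun s _ => ?_
  rw [swapOp_apply, swapOp_apply]
end Swap

/-- **Proposition (dilation of matrix-valued POVMs to matrix-valued PVMs).**  Let `q_{a,ij}`
(`1 ≤ a ≤ c`, `1 ≤ i,j ≤ n`) be operators on a complex Hilbert space `H` such that the matrices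
`Q_a = (q_{a,ij})` form a POVM in `M_n(B(H))`.  Then there are operators `p_{a,ij}` on the
ℓ²-direct sum `H^{(c+1)}` such that the matrices `P_a = (p_{a,ij})` form a PVM in
`M_n(B(H^{(c+1)}))` and `V* p_{a,ij} V = q_{a,ij}` for all `a, i, j`, where `V` is the
isometric embedding of `H` onto the first direct summand of `H^{(c+1)}`. -/

theorem matrix_povm_dilates_to_matrix_pvm {H : Type*} [NormedAddCommGroup H]
    [InnerProductSpace ℂ H] [CompleteSpace H] (n c : ℕ) (hn : 1 ≤ n) (hc : 1 ≤ c)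
    (q : Fin c → Matrix (Fin n) (Fin n) (H →L[ℂ] H))
    (hqpos : ∀ a, (matToOp (q a)).IsPositive)
    (hqsum : ∑ a, matToOp (q a) = 1) :
    ∃ p : Fin c → Matrix (Fin n) (Fin n)
        (PiLp 2 (fun _ : Fin (c+1) => H) →L[ℂ] PiLp 2 (fun _ : Fin (c+1) => H)),
      (∀ a, IsSelfAdjoint (matToOp (p a))) ∧
      (∀ a, (matToOp (p a)).comp (matToOp (p a)) = matToOp (p a)) ∧
      (∑ a, matToOp (p a) = 1) ∧
      (∀ a i j, (ContinuousLinearMap.adjoint (inclPi H (c+1) 0)).comp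
          ((p a i j).comp (inclPi H (c+1) 0)) = q a i j) := by
  classical
  -- positivity and square roots
  have hQ : ∀ a, (0 : PiLp 2 (fun _ : Fin n => H) →L[ℂ] PiLp 2 (fun _ : Fin n => H))
      ≤ matToOp (q a) := fun a => (ContinuousLinearMap.nonneg_iff_isPositive _).2 (hqpos a)
  set B : Fin c → (PiLp 2 (fun _ : Fin n => H) →L[ℂ] PiLp 2 (fun _ : Fin n => H)) :=
    fun a => CFC.sqrt (matToOp (q a)) with hBdef
  have hBstar : ∀ a, star (B a) = B a := fun a =>
    (CFC.sqrt_nonneg (a := matToOp (q a))).isSelfAdjoint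
  have hBB : ∀ a, B a * B a = matToOp (q a) := fun a => CFC.sqrt_mul_sqrt_self _ (hQ a)
  have hsum1 : ∑ b, B b * B b = 1 := by
    rw [Finset.sum_congr rfl fun b _ => hBB b]
    exact hqsum
  set u : Matrix (Fin (c+1)) (Fin (c+1)) (PiLp 2 (fun _ : Fin n => H) →L[ℂ] PiLp 2 (fun _ : Fin n => H)) := Matrix.of fun s t =>
    Fin.cases (Fin.cases 0 (fun b => B b) t)
      (fun a => Fin.cases (B a) (fun b => (if a = b then 1 else 0) - B a * B b) t) s with hu
  have hu00 : u 0 0 = 0 := by simp [hu]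
  have hu0s : ∀ b : Fin c, u 0 b.succ = B b := fun b => by simp [hu]
  have hus0 : ∀ a : Fin c, u a.succ 0 = B a := fun a => by simp [hu]
  have huss : ∀ a b : Fin c, u a.succ b.succ = (if a = b then 1 else 0) - B a * B b :=
    fun a b => by simp [hu]
  have hustar : star u = u := by
    refine Matrix.ext fun s t => ?_
    rw [Matrix.star_apply]
    induction s using Fin.cases with
    | zero =>
      induction t using Fin.cases with
      | zero => rw [hu00, ContinuousLinearMap.star_eq_adjoint]; simp
      | succ b => rw [hus0, hu0s, hBstar]
    | succ a =>
      induction t using Fin.cases with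
      | zero => rw [hu0s, hus0, hBstar]
      | succ b =>
        rw [huss, huss, ContinuousLinearMap.star_eq_adjoint, map_sub, ← ContinuousLinearMap.star_eq_adjoint,
          ← ContinuousLinearMap.star_eq_adjoint, star_mul, hBstar, hBstar]
        congr 1
        rcases eq_or_ne a b with h | h
        · simp [h]
        · simp [h, Ne.symm h, ContinuousLinearMap.star_eq_adjoint]
  have huu : u * u = 1 := by
    refine Matrix.ext fun s t => ?_
    rw [Matrix.mul_apply, Fin.sum_univ_succ]
    induction s using Fin.cases with
    | zero =>
      induction t using Fin.cases with
      | zero =>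
        rw [hu00, Matrix.one_apply_eq]
        simp only [hu0s, hus0, mul_zero, zero_add]
        exact hsum1
      | succ b =>
        rw [hu00, Matrix.one_apply_ne (by simp [Fin.ext_iff])]
        simp only [hu0s, huss, zero_mul, zero_add, mul_sub]
        rw [Finset.sum_sub_distrib]
        have h1 : ∑ x, B x * (if x = b then (1:PiLp 2 (fun _ : Fin n => H) →L[ℂ] PiLp 2 (fun _ : Fin n => H)) else 0) = B b := by
          simp [Finset.sum_ite_eq']
        have h2 : ∑ x, B x * (B x * B b) = B b := by
          simp only [← mul_assoc]
          rw [← Finset.sum_mul, hsum1, one_mul]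
        rw [h1, h2, sub_self]
    | succ a =>
      induction t using Fin.cases with
      | zero =>
        rw [hu00, Matrix.one_apply_ne (by simp [Fin.ext_iff])]
        simp only [hus0, huss, mul_zero, zero_add, sub_mul, ite_mul, one_mul, zero_mul]
        rw [Finset.sum_sub_distrib]
        have h1 : ∑ x, (if a = x then B x else (0:PiLp 2 (fun _ : Fin n => H) →L[ℂ] PiLp 2 (fun _ : Fin n => H))) = B a := by
          simp [Finset.sum_ite_eq]
        have h2 : ∑ x, B a * B x * B x = B a := by
          simp only [mul_assoc]
          rw [← Finset.mul_sum, hsum1, mul_one]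
        rw [h1, h2, sub_self]
      | succ b =>
        rw [hus0, hu0s]
        simp only [huss]
        have expand : ∀ x, ((if a = x then (1:PiLp 2 (fun _ : Fin n => H) →L[ℂ] PiLp 2 (fun _ : Fin n => H)) else 0) - B a * B x) *
            ((if x = b then (1:PiLp 2 (fun _ : Fin n => H) →L[ℂ] PiLp 2 (fun _ : Fin n => H)) else 0) - B x * B b)
            = ((if a = x then (1:PiLp 2 (fun _ : Fin n => H) →L[ℂ] PiLp 2 (fun _ : Fin n => H)) else 0) * (if x = b then (1:PiLp 2 (fun _ : Fin n => H) →L[ℂ] PiLp 2 (fun _ : Fin n => H)) else 0))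
              - (if a = x then (1:PiLp 2 (fun _ : Fin n => H) →L[ℂ] PiLp 2 (fun _ : Fin n => H)) else 0) * (B x * B b)
              - B a * B x * (if x = b then (1:PiLp 2 (fun _ : Fin n => H) →L[ℂ] PiLp 2 (fun _ : Fin n => H)) else 0) + B a * B x * (B x * B b) := by
          intro x
          rw [sub_mul, mul_sub, mul_sub]
          abel
        rw [Finset.sum_congr rfl fun x _ => expand x]
        rw [Finset.sum_add_distrib, Finset.sum_sub_distrib, Finset.sum_sub_distrib]
        have h1 : ∑ x, (if a = x then (1:PiLp 2 (fun _ : Fin n => H) →L[ℂ] PiLp 2 (fun _ : Fin n => H)) else 0) * (if x = b then (1:PiLp 2 (fun _ : Fin n => H) →L[ℂ] PiLp 2 (fun _ : Fin n => H)) else 0)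
            = if a = b then 1 else 0 := by
          simp [ite_mul, Finset.sum_ite_eq]
        have h2 : ∑ x, (if a = x then (1:PiLp 2 (fun _ : Fin n => H) →L[ℂ] PiLp 2 (fun _ : Fin n => H)) else 0) * (B x * B b) = B a * B b := by
          simp [ite_mul, Finset.sum_ite_eq]
        have h3 : ∑ x, B a * B x * (if x = b then (1:PiLp 2 (fun _ : Fin n => H) →L[ℂ] PiLp 2 (fun _ : Fin n => H)) else 0) = B a * B b := by
          simp [mul_ite, Finset.sum_ite_eq']
        have h4 : ∑ x, B a * B x * (B x * B b) = B a * B b := by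
          have : ∀ x, B a * B x * (B x * B b) = B a * (B x * B x) * B b := by
            intro x
            simp only [mul_assoc]
          rw [Finset.sum_congr rfl fun x _ => this x]
          calc ∑ x, B a * (B x * B x) * B b = B a * (∑ x, B x * B x) * B b := by
                rw [Finset.mul_sum, Finset.sum_mul]
            _ = B a * B b := by rw [hsum1, mul_one]
        rw [h1, h2, h3, h4]
        have : (1 : Matrix (Fin (c+1)) (Fin (c+1)) (PiLp 2 (fun _ : Fin n => H) →L[ℂ] PiLp 2 (fun _ : Fin n => H))) a.succ b.succ
            = if a = b then 1 else 0 := by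
          rw [Matrix.one_apply]
          simp [Fin.succ_inj]
        rw [this]
        abel
  -- diagonal projections
  set r : Fin (c+1) → Fin c := fun s => Fin.cases ⟨0, hc⟩ id s with hr
  set f : Fin c → Matrix (Fin (c+1)) (Fin (c+1)) (PiLp 2 (fun _ : Fin n => H) →L[ℂ] PiLp 2 (fun _ : Fin n => H)) := fun a =>
    Matrix.diagonal (fun s => if r s = a then 1 else 0) with hf
  have hfstar : ∀ a, star (f a) = f a := by
    intro a
    refine Matrix.ext fun s t => ?_
    simp only [Matrix.star_apply, hf]
    rcases eq_or_ne s t with h | h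
    · subst h
      simp only [Matrix.diagonal_apply_eq]
      rcases eq_or_ne (r s) a with h2 | h2 <;> simp [h2, ContinuousLinearMap.star_eq_adjoint]
    · rw [Matrix.diagonal_apply_ne _ (Ne.symm h), Matrix.diagonal_apply_ne _ h]
      simp [ContinuousLinearMap.star_eq_adjoint]
  have hff : ∀ a, f a * f a = f a := by
    intro a
    simp only [hf, Matrix.diagonal_mul_diagonal]
    refine congrArg _ (funext fun s => ?_)
    rcases eq_or_ne (r s) a with h | h <;> simp [h]
  have hfsum : ∑ a, f a = 1 := by
    refine Matrix.ext fun s t => ?_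
    rw [Matrix.sum_apply]
    rcases eq_or_ne s t with h | h
    · subst h
      simp only [hf, Matrix.diagonal_apply_eq, Matrix.one_apply_eq]
      simp
    · simp [hf, Matrix.diagonal_apply_ne _ h, Matrix.one_apply_ne h]
  -- the PVM matrices
  set g : Fin c → Matrix (Fin (c+1)) (Fin (c+1)) (PiLp 2 (fun _ : Fin n => H) →L[ℂ] PiLp 2 (fun _ : Fin n => H)) := fun a => u * f a * u with hg
  have hgstar : ∀ a, star (g a) = g a := by
    intro a
    rw [hg]
    simp only [star_mul, hustar, hfstar a, mul_assoc]
  have hgmul : ∀ a, g a * g a = g a := by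
    intro a
    rw [hg]
    simp only [mul_assoc]
    rw [← mul_assoc u u, huu, one_mul, ← mul_assoc (f a) (f a), hff]
  have hgsum : ∑ a, g a = 1 := by
    rw [hg]
    simp only [mul_assoc]
    rw [← Finset.mul_sum, ← Finset.sum_mul, hfsum, one_mul, huu]
  have hg00 : ∀ a, g a 0 0 = B a * B a := by
    intro a
    have h0 : g a 0 0 = ∑ l, u 0 l * (if r l = a then (1:PiLp 2 (fun _ : Fin n => H) →L[ℂ] PiLp 2 (fun _ : Fin n => H)) else 0) * u l 0 := by
      simp only [hg, hf]
      rw [Matrix.mul_apply]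
      exact Finset.sum_congr rfl fun l _ => by rw [Matrix.mul_diagonal]
    rw [h0, Fin.sum_univ_succ, hu00]
    simp only [zero_mul, zero_add]
    have h1 : ∀ b : Fin c, u 0 b.succ * (if r b.succ = a then (1:PiLp 2 (fun _ : Fin n => H) →L[ℂ] PiLp 2 (fun _ : Fin n => H)) else 0) * u b.succ 0
        = if b = a then B b * B b else 0 := by
      intro b
      rw [hu0s, hus0, hr]
      simp only [Fin.cases_succ, id]
      rcases eq_or_ne b a with h | h <;> simp [h]
    rw [Finset.sum_congr rfl fun b _ => h1 b, Finset.sum_ite_eq']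
    simp
  have hg00q : ∀ a, g a 0 0 = matToOp (q a) := fun a => (hg00 a).trans (hBB a)
  -- assembling the dilation
  refine ⟨fun a => Matrix.of fun i j =>
    (projPi (PiLp 2 (fun _ : Fin (c+1) => H)) n i).comp
      (((swapOp H (c+1) n).comp ((matToOp (g a)).comp (swapOp H n (c+1)))).comp
        (inclPi (PiLp 2 (fun _ : Fin (c+1) => H)) n j)), ?_, ?_, ?_, ?_⟩
  · -- self-adjointness
    intro a
    rw [matToOp_compression]
    rw [IsSelfAdjoint, ContinuousLinearMap.star_eq_adjoint,
      ContinuousLinearMap.adjoint_comp, ContinuousLinearMap.adjoint_comp,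
      adjoint_swapOp, adjoint_swapOp, matToOp_star, hgstar, ContinuousLinearMap.comp_assoc]
  · -- idempotency
    intro a
    rw [matToOp_compression]
    refine ContinuousLinearMap.ext fun x => ?_
    simp only [ContinuousLinearMap.comp_apply]
    rw [swapOp_swapOp]
    have hPP : ∀ y, matToOp (g a) (matToOp (g a) y) = matToOp (g a) y := fun y => by
      rw [← ContinuousLinearMap.comp_apply, ← matToOp_mul, hgmul]
    rw [hPP]
  · -- summing to the identity
    rw [Finset.sum_congr rfl fun a _ => matToOp_compression _]
    refine ContinuousLinearMap.ext fun x => ?_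
    rw [ContinuousLinearMap.sum_apply]
    simp only [ContinuousLinearMap.comp_apply]
    rw [← map_sum (swapOp H (c+1) n)]
    have h1 : ∑ a, matToOp (g a) (swapOp H n (c+1) x)
        = matToOp (∑ a, g a) (swapOp H n (c+1) x) := by
      rw [matToOp_sum, ContinuousLinearMap.sum_apply]
    rw [h1, hgsum, matToOp_one, ContinuousLinearMap.one_apply, swapOp_swapOp,
      ContinuousLinearMap.one_apply]
  · -- compression to the original POVM
    intro a i j
    rw [adjoint_inclPi]
    refine ContinuousLinearMap.ext fun x => ?_
    simp only [Matrix.of_apply, ContinuousLinearMap.comp_apply, projPi_apply]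
    rw [swapOp_apply]
    have hy : swapOp H n (c+1) (inclPi (PiLp 2 (fun _ : Fin (c+1) => H)) n j
        (inclPi H (c+1) 0 x))
        = inclPi (PiLp 2 (fun _ : Fin n => H)) (c+1) 0 (inclPi H n j x) := by
      refine PiLp.ext fun s => PiLp.ext fun i' => ?_
      rw [swapOp_apply]
      have hl : (inclPi (PiLp 2 (fun _ : Fin (c+1) => H)) n j (inclPi H (c+1) 0 x)) i' s
          = (if i' = j then inclPi H (c+1) 0 x else 0) s := by rw [inclPi_apply]
      have hrr : (inclPi (PiLp 2 (fun _ : Fin n => H)) (c+1) 0 (inclPi H n j x)) s i'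
          = (if s = 0 then inclPi H n j x else 0) i' := by rw [inclPi_apply]
      rw [hl, hrr]
      rcases eq_or_ne i' j with h | h
      · rcases eq_or_ne s 0 with h2 | h2
        · simp only [h, h2, ite_true, eq_self_iff_true]
          rw [inclPi_apply, inclPi_apply]
          simp [h, h2]
        · simp only [h, ite_true, eq_self_iff_true, h2, if_neg h2]
          rw [inclPi_apply]
          simp [h2]
      · rcases eq_or_ne s 0 with h2 | h2
        · simp only [h, if_neg h, h2, ite_true, eq_self_iff_true]
          rw [inclPi_apply]
          simp [h]
        · simp [h, h2]
    rw [hy]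
    have hz : (matToOp (g a) (inclPi (PiLp 2 (fun _ : Fin n => H)) (c+1) 0 (inclPi H n j x))) 0
        = matToOp (q a) (inclPi H n j x) := by
      rw [matToOp_apply]
      rw [Finset.sum_eq_single 0]
      · rw [inclPi_apply]
        simp only [ite_true, eq_self_iff_true]
        rw [hg00q]
      · intro b _ hb
        rw [inclPi_apply]
        simp [hb]
      · simp
    rw [hz, matToOp_apply]
    rw [Finset.sum_eq_single j]
    · rw [inclPi_apply]
      simp
    · intro b _ hb
      rw [inclPi_apply]
      simp [hb]
    · simp
end
end

section
/- Let A be a unital C*-algebra, let τ be a tracial state on A, and let P_1, …, P_c be a PVM with c outputs in M_n(A) (each matrix P_a = (P_{a,ij}) satisfies P_a* = P_a, P_a² = P_a in M_n(A), and Σ_{a=1}^c P_a = I_n). Then the tuple X^{(a,b)}_{(i,j),(k,l)} = τ(P_{a,ij} (P_{b,kl})*) is synchronous: for all a ≠ b, Σ_{i,j=1}^n τ(P_{a,ij} (P_{b,ij})*) = 0, and moreover (1/n) Σ_{a=1}^c Σ_{i,j=1}^n τ(P_{a,ij} (P_{a,ij})*) = 1. -/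
open Matrix
open scoped ComplexOrder

set_option synthInstance.maxHeartbeats 400000
set_option maxHeartbeats 1000000

/-- If `τ` is a tracial state on a unital C*-algebra `A` and `P_1, …, P_c` is a PVM with `c`
outputs in `M_n(A)`, then the correlation `X^{(a,b)}_{(i,j),(k,l)} = τ(P_{a,ij} (P_{b,kl})*)`
is synchronous: `∑_{i,j} τ(P_{a,ij} (P_{b,ij})*) = 0` whenever `a ≠ b`, and
`(1/n) ∑_a ∑_{i,j} τ(P_{a,ij} (P_{a,ij})*) = 1`. -/
theorem trace_pvm_correlation_synchronous
    {A : Type*} [NormedRing A] [StarRing A] [CStarRing A]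
    [NormedAlgebra ℂ A] [CompleteSpace A] [StarModule ℂ A]
    (τ : A →ₗ[ℂ] ℂ) (hτ1 : τ 1 = 1)
    (hτpos : ∀ x : A, 0 ≤ τ (star x * x))
    (hτtr : ∀ x y : A, τ (x * y) = τ (y * x))
    (n c : ℕ) (hn : 1 ≤ n)
    (P : Fin c → Matrix (Fin n) (Fin n) A)
    (hadj : ∀ a, (P a)ᴴ = P a)
    (hidem : ∀ a, P a * P a = P a)
    (hsum : ∑ a, P a = 1) :
    (∀ a b : Fin c, a ≠ b → ∑ i, ∑ j, τ (P a i j * star (P b i j)) = 0) ∧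
    (1 / (n : ℂ)) * ∑ a, ∑ i, ∑ j, τ (P a i j * star (P a i j)) = 1 := by
  set T : Matrix (Fin n) (Fin n) A → ℂ := fun M => ∑ i, τ (M i i) with hT
  have hTtr : ∀ M N : Matrix (Fin n) (Fin n) A, T (M * N) = T (N * M) := by
    intro M N
    simp only [hT, Matrix.mul_apply, map_sum]
    rw [Finset.sum_comm]
    congr 1; ext k; congr 1; ext i; exact hτtr _ _
  have hTpos : ∀ M : Matrix (Fin n) (Fin n) A, 0 ≤ T (Mᴴ * M) := by
    intro M
    simp only [hT, Matrix.mul_apply, Matrix.conjTranspose_apply, map_sum]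
    exact Finset.sum_nonneg fun i _ => Finset.sum_nonneg fun k _ => hτpos _
  have hstar : ∀ (b : Fin c) (i j : Fin n), star (P b i j) = P b j i := by
    intro b i j
    have := congrFun (congrFun (hadj b) j) i
    simpa [Matrix.conjTranspose_apply] using this
  have key : ∀ a b : Fin c, ∑ i, ∑ j, τ (P a i j * star (P b i j)) = T (P a * P b) := by
    intro a b
    simp only [hT, Matrix.mul_apply, map_sum, hstar]
  have hTnn : ∀ a b : Fin c, 0 ≤ T (P a * P b) := by
    intro a b
    have h1 : (P b * P a)ᴴ * (P b * P a) = P a * P b * P a := by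
      rw [Matrix.conjTranspose_mul, hadj, hadj, Matrix.mul_assoc,
        ← Matrix.mul_assoc (P b), hidem, ← Matrix.mul_assoc]
    have h2 : T (P a * P b * P a) = T (P a * P b) := by
      rw [hTtr, ← Matrix.mul_assoc, hidem]
    rw [← h2, ← h1]; exact hTpos _
  have hTsum : ∀ a : Fin c, ∑ b, T (P a * P b) = T (P a) := by
    intro a
    have : ∑ b, T (P a * P b) = T (∑ b, P a * P b) := by
      simp only [hT, Matrix.sum_apply, map_sum]
      rw [Finset.sum_comm]
    rw [this, ← Finset.mul_sum, hsum, Matrix.mul_one]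
  have horth : ∀ a b : Fin c, a ≠ b → T (P a * P b) = 0 := by
    intro a b hab
    have h0 : ∑ b' ∈ Finset.univ.erase a, T (P a * P b') = 0 := by
      have := hTsum a
      rw [← Finset.add_sum_erase _ _ (Finset.mem_univ a), hidem] at this
      exact add_eq_left.mp this
    exact (Finset.sum_eq_zero_iff_of_nonneg fun b' _ => hTnn a b').mp h0 b
      (Finset.mem_erase.mpr ⟨hab.symm, Finset.mem_univ b⟩)
  constructor
  · intro a b hab
    rw [key]; exact horth a b hab
  · have : ∑ a, ∑ i, ∑ j, τ (P a i j * star (P a i j)) = (n : ℂ) := by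
      calc ∑ a, ∑ i, ∑ j, τ (P a i j * star (P a i j)) = ∑ a, T (P a * P a) := by
            simp only [key]
        _ = ∑ a, T (P a) := by simp only [hidem]
        _ = T 1 := by
            simp only [hT]
            rw [Finset.sum_comm]
            simp [← map_sum, ← Matrix.sum_apply, hsum]
        _ = (n : ℂ) := by simp [hT, Matrix.one_apply_eq, hτ1]
    rw [this]
    field_simp
end

section
/- Let d, k ≥ 1 and n = dk, let M = {I_d ⊗ A : A ∈ M_k(ℂ)} ⊆ M_n(ℂ) with commutant M' = {B ⊗ I_k : B ∈ M_d(ℂ)}, and let 𝒜 be a unital *-algebra over ℂ. For 1 ≤ a ≤ c, let q_a = (q_{a,pq}) ∈ M_k(𝒜) and let P_a ∈ M_n(𝒜) be the matrix with entries P_a((x,p),(y,q)) = δ_{xy} q_{a,pq} (indices x, y ∈ {1,…,d}, p, q ∈ {1,…,k}), i.e. P_a = I_d ⊗ q_a. Assume each P_a is a self-adjoint idempotent in M_n(𝒜), P_a P_b = 0 for a ≠ b, Σ_{a=1}^c P_a = I_n ⊗ 1_𝒜, and P_a (X ⊗ 1_𝒜) P_a = 0 for every X ∈ M_n(ℂ)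 with Tr(Y* X) = 0 for all Y ∈ M'. Then for each a, the element R_a = k · Σ_{p=1}^k q_{a,pp} of 𝒜 (which equals (k/d) times the entry-wise trace (Tr ⊗ id)(P_a)) is a self-adjoint idempotent, and Σ_{a=1}^c R_a = k² · 1_𝒜. -/
open Matrix
open scoped Kronecker

set_option synthInstance.maxHeartbeats 400000
set_option maxHeartbeats 1000000

/-- **Lemma (rigidity of colorings of one-block complete graphs).**  Let `n = dk`,
`M = ℂI_d ⊗ M_k ⊆ M_n(ℂ)` (with commutant `M' = M_d ⊗ ℂI_k`), and let `𝒜` be a unital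
*-algebra over `ℂ`.  Suppose `P_1, …, P_c ∈ M ⊗ 𝒜 ⊆ M_n(𝒜)` are mutually orthogonal
self-adjoint idempotents summing to the identity, of the form `P_a = I_d ⊗ q_a` with
`q_a ∈ M_k(𝒜)`, such that `P_a (X ⊗ 1_𝒜) P_a = 0` for every `X ∈ M_n(ℂ)` orthogonal to `M'`.
Then each `R_a = k · ∑_p q_{a,pp}` is a self-adjoint idempotent in `𝒜`, and
`∑_{a=1}^c R_a = k² · 1_𝒜`. -/
theorem rigidity_one_block (d k : ℕ) (hd : 1 ≤ d) (hk : 1 ≤ k)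
    (𝒜 : Type*) [Ring 𝒜] [Algebra ℂ 𝒜] [StarRing 𝒜] [StarModule ℂ 𝒜]
    (c : ℕ)
    (q : Fin c → Matrix (Fin k) (Fin k) 𝒜)
    (P : Fin c → Matrix (Fin d × Fin k) (Fin d × Fin k) 𝒜)
    (hPq : ∀ (a : Fin c) (x y : Fin d) (p₁ p₂ : Fin k),
      P a (x, p₁) (y, p₂) = if x = y then q a p₁ p₂ else 0)
    (hadj : ∀ a, (P a)ᴴ = P a)
    (hidem : ∀ a, P a * P a = P a)
    (horth : ∀ a b, a ≠ b → P a * P b = 0)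
    (hsum : ∑ a, P a = 1)
    (hperp : ∀ (a : Fin c) (X : Matrix (Fin d × Fin k) (Fin d × Fin k) ℂ),
      (∀ B : Matrix (Fin d) (Fin d) ℂ,
        ((B ⊗ₖ (1 : Matrix (Fin k) (Fin k) ℂ))ᴴ * X).trace = 0) →
      P a * X.map (algebraMap ℂ 𝒜) * P a = 0) :
    (∀ a, star ((k : 𝒜) * ∑ p, q a p p) = (k : 𝒜) * ∑ p, q a p p ∧
      ((k : 𝒜) * ∑ p, q a p p) * ((k : 𝒜) * ∑ p, q a p p) = (k : 𝒜) * ∑ p, q a p p) ∧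
    ∑ a, ((k : 𝒜) * ∑ p, q a p p) = (k : 𝒜) ^ 2 := by
  obtain ⟨x0⟩ : Nonempty (Fin d) := ⟨⟨0, hd⟩⟩
  -- entry-wise facts about q
  have hq_idem : ∀ (a : Fin c) (p j : Fin k), ∑ m, q a p m * q a m j = q a p j := by
    intro a p j
    have := congrFun (congrFun (hidem a) (x0, p)) (x0, j)
    simpa [Matrix.mul_apply, Fintype.sum_prod_type, hPq, ite_mul, mul_ite] using this
  have hq_star : ∀ (a : Fin c) (p j : Fin k), star (q a p j) = q a j p := by
    intro a p j
    have := congrFun (congrFun (hadj a) (x0, j)) (x0, p)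
    simpa [Matrix.conjTranspose_apply, hPq] using this
  have hq_sum : ∀ (p j : Fin k), ∑ a, q a p j = if p = j then 1 else 0 := by
    intro p j
    have := congrFun (congrFun hsum (x0, p)) (x0, j)
    simpa [Matrix.sum_apply, hPq, Matrix.one_apply, Prod.ext_iff] using this
  -- key consequence of the orthogonality hypothesis
  have key : ∀ (a : Fin c) (Z : Matrix (Fin k) (Fin k) ℂ), (∑ m, Z m m = 0) →
      ∀ i j, ∑ m, ∑ m', q a i m * algebraMap ℂ 𝒜 (Z m m') * q a m' j = 0 := by
    intro a Z hZ i j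
    set X : Matrix (Fin d × Fin k) (Fin d × Fin k) ℂ :=
      Matrix.of fun z w => if z.1 = x0 ∧ w.1 = x0 then Z z.2 w.2 else 0 with hX
    have htr : ∀ B : Matrix (Fin d) (Fin d) ℂ,
        ((B ⊗ₖ (1 : Matrix (Fin k) (Fin k) ℂ))ᴴ * X).trace = 0 := by
      intro B
      simp only [Matrix.trace, Matrix.diag, Matrix.mul_apply, Matrix.conjTranspose_apply,
        Matrix.kroneckerMap_apply, Matrix.one_apply, hX, Matrix.of_apply,
        Fintype.sum_prod_type]
      simp only [Finset.mul_sum, Finset.sum_ite_eq, Finset.sum_ite_eq', apply_ite,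
        mul_ite, ite_mul, ← Finset.mul_sum, hZ, mul_zero, zero_mul, mul_one,
        star_zero, map_zero, Finset.mem_univ, if_true, ite_and]
      rw [Finset.sum_comm]
      simp [Finset.sum_ite_eq', ← Finset.mul_sum, hZ]
    have h0 := congrFun (congrFun (hperp a X htr) (x0, i)) (x0, j)
    have heq : ∑ m, ∑ m', q a i m * algebraMap ℂ 𝒜 (Z m m') * q a m' j
        = (P a * X.map (algebraMap ℂ 𝒜) * P a) (x0, i) (x0, j) := by
      simp only [Matrix.mul_apply, Matrix.map_apply, hX, Matrix.of_apply, hPq,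
        Fintype.sum_prod_type, ite_mul, mul_ite, mul_zero, zero_mul, apply_ite, map_zero]
      simp only [ite_and, Finset.sum_ite_irrel, Finset.sum_const_zero, Finset.sum_ite_eq,
        Finset.sum_ite_eq', Finset.mem_univ, if_true,
        Finset.sum_mul, Finset.mul_sum, ite_mul, zero_mul, and_true, true_and]
      rw [Finset.sum_comm]
    rw [heq, h0]
    simp
  -- cross terms vanish
  have hD : ∀ (a : Fin c) (p r : Fin k), p ≠ r → ∀ i j, q a i p * q a r j = 0 := by
    intro a p r hpr i j
    have := key a (Matrix.single p r 1) ?_ i j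
    · simpa [Matrix.single, ite_and, Finset.sum_ite_eq, apply_ite,
        mul_ite, ite_mul] using this
    · simp [Matrix.single, ite_and, Finset.sum_ite_eq, Ne.symm hpr, hpr]
  -- independence of the middle index
  have hE : ∀ (a : Fin c) (p r : Fin k) (i j : Fin k),
      q a i p * q a p j = q a i r * q a r j := by
    intro a p r i j
    have := key a (Matrix.single p p 1 - Matrix.single r r 1) ?_ i j
    · simp only [Matrix.sub_apply, map_sub, mul_sub, sub_mul,
        Finset.sum_sub_distrib] at this
      rw [sub_eq_zero] at this
      simpa [Matrix.single, ite_and, Finset.sum_ite_eq, apply_ite,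
        mul_ite, ite_mul] using this
    · simp [Matrix.sub_apply, Matrix.single, ite_and, Finset.sum_ite_eq]
  have hhalf : ∀ (a : Fin c) (i p j : Fin k), (k : 𝒜) * (q a i p * q a p j) = q a i j := by
    intro a i p j
    have h1 : ∑ m, q a i m * q a m j = ∑ _m : Fin k, q a i p * q a p j :=
      Finset.sum_congr rfl fun m _ => hE a m p i j
    rw [hq_idem, Finset.sum_const, Finset.card_univ, Fintype.card_fin, nsmul_eq_mul] at h1
    exact h1.symm
  have hc : ∀ x : 𝒜, (k : 𝒜) * x = x * (k : 𝒜) := fun x => (Nat.cast_commute k x).eq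
  refine ⟨fun a => ⟨?_, ?_⟩, ?_⟩
  · rw [StarMul.star_mul, star_natCast, star_sum]
    simp only [hq_star]
    exact ((Nat.cast_commute k _).symm).eq
  · set S := ∑ p, q a p p with hS
    have hSS : S * S = ∑ p : Fin k, q a p p * q a p p := by
      rw [hS, Finset.sum_mul_sum]
      refine Finset.sum_congr rfl fun p _ => ?_
      exact Finset.sum_eq_single p (fun r _ hr => hD a p r (Ne.symm hr) p r) (by simp)
    have hassoc : ((k : 𝒜) * S) * ((k : 𝒜) * S) = (k : 𝒜) * ((k : 𝒜) * (S * S)) := by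
      rw [mul_assoc, ← mul_assoc S, ← hc S, mul_assoc]
    rw [hassoc, hSS, Finset.mul_sum]
    exact congrArg _ (Finset.sum_congr rfl fun p _ => hhalf a p p p)
  · have h2 : ∑ a, ((k : 𝒜) * ∑ p, q a p p) = (k : 𝒜) * ∑ p : Fin k, ∑ a, q a p p := by
      rw [← Finset.mul_sum, Finset.sum_comm]
    rw [h2]
    simp [hq_sum, sq, Finset.sum_const, mul_one]
end

section
/- Let M ⊆ M_n(ℂ) be a unital *-subalgebra with commutant M', and let 𝒜 be a nonzero hereditary unital *-algebra over ℂ. Suppose P_1, …, P_c ∈ M_n(𝒜) are self-adjoint idempotents with P_a P_b = 0 for a ≠ b and Σ_{a=1}^c P_a = I_n ⊗ 1_𝒜, such that each P_a commutes with Y ⊗ 1_𝒜 for every Y ∈ M' (i.e. P_a ∈ M ⊗ 𝒜), and P_a (X ⊗ 1_𝒜) P_a = 0 for every X ∈ M_n(ℂ) with Tr(Y* X) = 0 for all Y ∈ M'. Then c ≥ dim_ℂ M. (That is, any hereditary coloring of the complete quantum graph (M_n, M, M_n) requires at least dim(M) colors.) -/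
open Matrix

set_option synthInstance.maxHeartbeats 400000
set_option maxHeartbeats 1000000

namespace HCol

abbrev MatC (n : ℕ) := Matrix (Fin n) (Fin n) ℂ

variable {n : ℕ}

lemma trace_sq (x : MatC n) : (xᴴ * x).trace = ∑ j, ∑ i, (Complex.normSq (x i j) : ℂ) := by
  rw [Matrix.trace]
  simp only [Matrix.diag_apply, Matrix.mul_apply, Matrix.conjTranspose_apply]
  congr 1; funext j; congr 1; funext i
  rw [mul_comm]
  exact_mod_cast Complex.mul_conj (x i j)

lemma eq_zero_of_trace_sq (x : MatC n) (hx : (xᴴ * x).trace = 0) : x = 0 := by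
  rw [trace_sq] at hx
  have h2 : ((∑ j, ∑ i, Complex.normSq (x i j) : ℝ) : ℂ) = 0 := by push_cast; exact_mod_cast hx
  have h3 : ∑ j, ∑ i : Fin n, Complex.normSq (x i j) = 0 := by exact_mod_cast h2
  funext i j
  have h4 : ∀ j' ∈ Finset.univ, (0:ℝ) ≤ ∑ i : Fin n, Complex.normSq (x i j') := by
    intro j' _; exact Finset.sum_nonneg fun i _ => Complex.normSq_nonneg _
  have h5 := (Finset.sum_eq_zero_iff_of_nonneg h4).mp h3 j (Finset.mem_univ _)
  have h6 := (Finset.sum_eq_zero_iff_of_nonneg (fun i _ => Complex.normSq_nonneg (x i j))).mp h5 i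
    (Finset.mem_univ _)
  simpa using Complex.normSq_eq_zero.mp h6

noncomputable def matCore (n : ℕ) : InnerProductSpace.Core ℂ (MatC n) where
  inner A B := (Aᴴ * B).trace
  conj_inner_symm := by
    intro x y
    show (starRingEnd ℂ) ((yᴴ * x).trace) = (xᴴ * y).trace
    have : ((yᴴ * x)ᴴ).trace = star ((yᴴ * x).trace) := Matrix.trace_conjTranspose _
    rw [show (starRingEnd ℂ) ((yᴴ * x).trace) = star ((yᴴ * x).trace) from rfl, ← this,
      conjTranspose_mul, conjTranspose_conjTranspose]
  re_inner_nonneg := by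
    intro x
    show 0 ≤ Complex.re ((xᴴ * x).trace)
    rw [trace_sq]
    rw [show Complex.re (∑ j, ∑ i, (Complex.normSq (x i j) : ℂ))
        = ∑ j, ∑ i, Complex.normSq (x i j) by push_cast [Complex.re_sum]; norm_num]
    exact Finset.sum_nonneg fun j _ => Finset.sum_nonneg fun i _ => Complex.normSq_nonneg _
  add_left := by
    intro x y z
    show ((x + y)ᴴ * z).trace = _
    rw [conjTranspose_add, add_mul, Matrix.trace_add]
  smul_left := by
    intro x y r
    show ((r • x)ᴴ * y).trace = _
    rw [conjTranspose_smul, Matrix.smul_mul, Matrix.trace_smul]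
    rfl
  definite := fun x hx => eq_zero_of_trace_sq x hx

noncomputable local instance (n : ℕ) : NormedAddCommGroup (MatC n) :=
  (matCore n).toNormedAddCommGroup

noncomputable local instance (n : ℕ) : InnerProductSpace ℂ (MatC n) :=
  InnerProductSpace.ofCore (matCore n).toCore

lemma inner_def (A B : MatC n) : (inner ℂ A B : ℂ) = (Aᴴ * B).trace := rfl


/-- An orthonormal family spanning a subalgebra. -/
structure ONFam {n m : ℕ} (p : Subalgebra ℂ (MatC n)) (B : Fin m → MatC n) : Prop where
  mem : ∀ s, B s ∈ p
  ortho : ∀ s t, ((B s)ᴴ * B t).trace = if s = t then 1 else 0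
  expand : ∀ x ∈ p, (∑ s, ((B s)ᴴ * x).trace • B s) = x

lemma exists_onfam (p : Subalgebra ℂ (MatC n)) :
    ∃ B : Fin (Module.finrank ℂ (Subalgebra.toSubmodule p)) → MatC n, ONFam p B := by
  classical
  set q := Subalgebra.toSubmodule p with hq
  let b := stdOrthonormalBasis ℂ q
  refine ⟨fun s => (b s : MatC n), ?_, ?_, ?_⟩
  · intro s; exact (b s).2
  · intro s t
    have h := orthonormal_iff_ite.mp b.orthonormal s t
    rw [Submodule.coe_inner] at h
    exact h
  · intro x hx
    have hxq : x ∈ q := hx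
    have h := b.sum_repr ⟨x, hxq⟩
    have h2 : ∀ s, b.repr ⟨x, hxq⟩ s = ((b s : MatC n)ᴴ * x).trace := by
      intro s
      rw [b.repr_apply_apply]
      rw [Submodule.coe_inner]
      rfl
    calc (∑ s, ((b s : MatC n)ᴴ * x).trace • (b s : MatC n))
        = ((∑ s, b.repr ⟨x, hxq⟩ s • b s : q) : MatC n) := by
          push_cast
          exact Finset.sum_congr rfl fun s _ => by rw [h2]
      _ = x := by rw [h]


variable {m : ℕ} {p : Subalgebra ℂ (MatC n)} {B : Fin m → MatC n}

lemma conj_trace_eq (A : MatC n) : (starRingEnd ℂ) A.trace = (Aᴴ).trace := by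
  rw [Matrix.trace_conjTranspose]; rfl

lemma conj_trace_mul (A B : MatC n) :
    (starRingEnd ℂ) ((Aᴴ * B).trace) = (Bᴴ * A).trace := by
  rw [conj_trace_eq, conjTranspose_mul, conjTranspose_conjTranspose]

/-- Parseval-type identity. -/
lemma ONFam.parseval (hB : ONFam p B) {x : MatC n} (hx : x ∈ p) (y : MatC n) :
    ∑ s, (xᴴ * B s).trace * ((B s)ᴴ * y).trace = (xᴴ * y).trace := by
  conv_rhs => rw [← hB.expand x hx]
  rw [conjTranspose_sum]
  simp only [conjTranspose_smul, Matrix.sum_mul, Matrix.smul_mul, Matrix.trace_sum,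
    Matrix.trace_smul]
  refine Finset.sum_congr rfl fun s _ => ?_
  have h1 : (xᴴ * B s).trace = (starRingEnd ℂ) (((B s)ᴴ * x).trace) := by
    rw [conj_trace_eq, conjTranspose_mul, conjTranspose_conjTranspose]
  rw [h1]
  simp [smul_eq_mul]

/-- The star of an orthonormal family of a star-closed subalgebra. -/
lemma ONFam.star (hB : ONFam p B) (hst : ∀ x ∈ p, xᴴ ∈ p) :
    ONFam p (fun s => (B s)ᴴ) := by
  refine ⟨fun s => hst _ (hB.mem s), ?_, ?_⟩
  · intro s t
    show ((B s)ᴴᴴ * (B t)ᴴ).trace = _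
    rw [conjTranspose_conjTranspose, Matrix.trace_mul_comm, hB.ortho t s]
    simp [eq_comm]
  · intro x hx
    show (∑ s, ((B s)ᴴᴴ * x).trace • (B s)ᴴ) = x
    have hxs : xᴴ ∈ p := hst _ hx
    have h := hB.expand xᴴ hxs
    have h2 := congrArg conjTranspose h
    rw [conjTranspose_sum, conjTranspose_conjTranspose] at h2
    conv_rhs => rw [← h2]
    refine Finset.sum_congr rfl fun s _ => ?_
    rw [conjTranspose_smul, conjTranspose_conjTranspose]
    congr 1
    rw [← Matrix.trace_conjTranspose, conjTranspose_mul, conjTranspose_conjTranspose,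
      Matrix.trace_mul_comm, conjTranspose_conjTranspose]


/-- Casimir element of a family. -/
noncomputable def casimir {n m : ℕ} (B : Fin m → MatC n) : MatC n := ∑ s, B s * (B s)ᴴ

lemma ONFam.casimir_indep {m' : ℕ} {B' : Fin m' → MatC n}
    (hB : ONFam p B) (hB' : ONFam p B') : casimir B = casimir B' := by
  unfold casimir
  have hexp : ∀ s, B s = ∑ t, ((B' t)ᴴ * B s).trace • B' t := fun s =>
    (hB'.expand (B s) (hB.mem s)).symm
  calc (∑ s, B s * (B s)ᴴ)
      = ∑ s, ∑ t, ∑ u, (((B' t)ᴴ * B s).trace * (starRingEnd ℂ) (((B' u)ᴴ * B s).trace))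
          • (B' t * (B' u)ᴴ) := by
        refine Finset.sum_congr rfl fun s _ => ?_
        conv_lhs => rw [hexp s]
        rw [conjTranspose_sum, Matrix.sum_mul]
        refine Finset.sum_congr rfl fun t _ => ?_
        rw [Matrix.mul_sum]
        refine Finset.sum_congr rfl fun u _ => ?_
        rw [conjTranspose_smul, Matrix.smul_mul, Matrix.mul_smul, smul_smul]
        rfl
    _ = ∑ t, ∑ u, (∑ s, ((B' t)ᴴ * B s).trace * ((B s)ᴴ * B' u).trace)
          • (B' t * (B' u)ᴴ) := by
        rw [Finset.sum_comm]
        refine Finset.sum_congr rfl fun t _ => ?_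
        rw [Finset.sum_comm]
        refine Finset.sum_congr rfl fun u _ => ?_
        rw [Finset.sum_smul]
        refine Finset.sum_congr rfl fun s _ => ?_
        congr 2
        exact conj_trace_mul _ _
    _ = ∑ t, ∑ u, (((B' t)ᴴ * B' u).trace) • (B' t * (B' u)ᴴ) := by
        refine Finset.sum_congr rfl fun t _ => Finset.sum_congr rfl fun u _ => ?_
        rw [hB.parseval (hB'.mem t) (B' u)]
    _ = ∑ t, B' t * (B' t)ᴴ := by
        refine Finset.sum_congr rfl fun t _ => ?_
        rw [Finset.sum_eq_single t]
        · rw [hB'.ortho t t]; simp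
        · intro u _ hu
          rw [hB'.ortho t u, if_neg (Ne.symm hu)]
          simp
        · intro h; exact absurd (Finset.mem_univ t) h

lemma ONFam.psi_comm (hB : ONFam p B) (hst : ∀ x ∈ p, xᴴ ∈ p)
    {Z : MatC n} (hZ : Z ∈ p) (X : MatC n) :
    Z * (∑ s, B s * X * (B s)ᴴ) = (∑ s, B s * X * (B s)ᴴ) * Z := by
  have hZs : Zᴴ ∈ p := hst _ hZ
  calc Z * (∑ s, B s * X * (B s)ᴴ)
      = ∑ s, ∑ t, (((B t)ᴴ * (Z * B s)).trace) • (B t * X * (B s)ᴴ) := by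
        rw [Matrix.mul_sum]
        refine Finset.sum_congr rfl fun s _ => ?_
        have h1 : Z * B s = ∑ t, ((B t)ᴴ * (Z * B s)).trace • B t :=
          (hB.expand _ (Subalgebra.mul_mem p hZ (hB.mem s))).symm
        calc Z * (B s * X * (B s)ᴴ) = (Z * B s) * (X * (B s)ᴴ) := by
              simp only [Matrix.mul_assoc]
          _ = ∑ t, ((B t)ᴴ * (Z * B s)).trace • (B t * X * (B s)ᴴ) := by
              conv_lhs => rw [h1]
              rw [Matrix.sum_mul]
              refine Finset.sum_congr rfl fun t _ => ?_
              rw [Matrix.smul_mul]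
              simp only [Matrix.mul_assoc]
    _ = ∑ s, ∑ t, ((starRingEnd ℂ) (((B s)ᴴ * (Zᴴ * B t)).trace)) • (B t * X * (B s)ᴴ) := by
        refine Finset.sum_congr rfl fun s _ => Finset.sum_congr rfl fun t _ => ?_
        congr 1
        rw [conj_trace_mul, conjTranspose_mul, conjTranspose_conjTranspose, Matrix.mul_assoc]
    _ = (∑ s, B s * X * (B s)ᴴ) * Z := by
        rw [Matrix.sum_mul, Finset.sum_comm]
        refine Finset.sum_congr rfl fun t _ => ?_
        have h1 : Zᴴ * B t = ∑ s, ((B s)ᴴ * (Zᴴ * B t)).trace • B s :=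
          (hB.expand _ (Subalgebra.mul_mem p hZs (hB.mem t))).symm
        have h2 : (B t)ᴴ * Z = ∑ s, ((starRingEnd ℂ) (((B s)ᴴ * (Zᴴ * B t)).trace)) • (B s)ᴴ := by
          have h3 := congrArg conjTranspose h1
          rw [conjTranspose_mul, conjTranspose_conjTranspose, conjTranspose_sum] at h3
          rw [h3]
          exact Finset.sum_congr rfl fun s _ => by rw [conjTranspose_smul]; rfl
        symm
        calc (B t * X * (B t)ᴴ) * Z = (B t * X) * ((B t)ᴴ * Z) := by
              simp only [Matrix.mul_assoc]
          _ = ∑ s, ((starRingEnd ℂ) (((B s)ᴴ * (Zᴴ * B t)).trace)) • (B t * X * (B s)ᴴ) := by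
            rw [h2, Matrix.mul_sum]
            refine Finset.sum_congr rfl fun s _ => ?_
            rw [Matrix.mul_smul, ← Matrix.mul_assoc]


lemma sum_mulVec' {k : ℕ} (A : Fin k → MatC n) (v : Fin n → ℂ) :
    (∑ s, A s).mulVec v = ∑ s, (A s).mulVec v := by
  funext i
  simp only [Matrix.mulVec, dotProduct, Matrix.sum_apply, Finset.sum_apply, Finset.sum_mul]
  rw [Finset.sum_comm]

lemma smul_mulVec' (c : ℂ) (A : MatC n) (v : Fin n → ℂ) :
    (c • A).mulVec v = c • (A.mulVec v) := by
  funext i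
  simp [Matrix.mulVec, dotProduct, Finset.mul_sum, mul_assoc]

/-- If the Casimir of an `ONFam` of a unital subalgebra kills `v`, then `v = 0`. -/
lemma casimir_mulVec_eq_zero (hB : ONFam p B) (v : Fin n → ℂ)
    (hv : (casimir B).mulVec v = 0) : v = 0 := by
  classical
  -- star v ⬝ᵥ casimir.mulVec v = ∑ s ‖w s‖²
  set w : Fin m → Fin n → ℂ := fun s => ((B s)ᴴ).mulVec v with hw
  have key : ∀ s, dotProduct (star v) ((B s * (B s)ᴴ).mulVec v)
      = dotProduct (star (w s)) (w s) := by
    intro s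
    rw [← Matrix.mulVec_mulVec]
    rw [dotProduct_mulVec]
    rw [Matrix.star_mulVec]
    rw [hw]
    simp [Matrix.star_mulVec, Matrix.conjTranspose_conjTranspose]
  have h0 : (0:ℂ) = ∑ s, dotProduct (star (w s)) (w s) := by
    have : dotProduct (star v) ((casimir B).mulVec v) = 0 := by
      rw [hv]; simp [dotProduct]
    rw [← this]
    unfold casimir
    rw [sum_mulVec']
    rw [show (star v ⬝ᵥ ∑ s, (B s * (B s)ᴴ) *ᵥ v) = ∑ s, star v ⬝ᵥ ((B s * (B s)ᴴ) *ᵥ v) by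
      simp only [dotProduct, Finset.sum_apply, Finset.mul_sum]
      rw [Finset.sum_comm]]
    exact Finset.sum_congr rfl fun s _ => key s
  have h1 : ∀ s, w s = 0 := by
    have h2 : (0:ℝ) = ∑ s, ∑ i, Complex.normSq (w s i) := by
      have h3 : (0:ℂ) = ∑ s, ∑ i, (Complex.normSq (w s i) : ℂ) := by
        rw [h0]
        refine Finset.sum_congr rfl fun s _ => ?_
        simp only [dotProduct, Pi.star_apply]
        refine Finset.sum_congr rfl fun i _ => ?_
        rw [mul_comm]
        exact_mod_cast (Complex.mul_conj (w s i))
      exact_mod_cast h3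
    intro s
    funext i
    have h4 := (Finset.sum_eq_zero_iff_of_nonneg (fun s (_ : s ∈ Finset.univ) =>
      Finset.sum_nonneg fun i _ => Complex.normSq_nonneg (w s i))).mp h2.symm s (Finset.mem_univ _)
    have h5 := (Finset.sum_eq_zero_iff_of_nonneg (fun i (_ : i ∈ Finset.univ) =>
      Complex.normSq_nonneg (w s i))).mp h4 i (Finset.mem_univ _)
    simpa using Complex.normSq_eq_zero.mp h5
  -- now v = 1.mulVec v = ∑ conj c_s • w s = 0
  have hone : (1 : MatC n) = ∑ s, ((starRingEnd ℂ) (((B s)ᴴ).trace)) • (B s)ᴴ := by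
    have h6 := hB.expand 1 (Subalgebra.one_mem p)
    have h7 := congrArg conjTranspose h6
    rw [conjTranspose_sum, conjTranspose_one] at h7
    rw [← h7]
    refine Finset.sum_congr rfl fun s _ => ?_
    rw [conjTranspose_smul, Matrix.mul_one]
    rfl
  have : v = (1 : MatC n).mulVec v := by simp [Matrix.one_mulVec]
  rw [this, hone, sum_mulVec']
  refine Finset.sum_eq_zero fun s _ => ?_
  rw [smul_mulVec']
  rw [show ((B s)ᴴ).mulVec v = w s from rfl, h1 s]
  simp


section Commutant

variable (M : StarSubalgebra ℂ (MatC n))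

/-- The commutant of `M`. -/
def NN : Subalgebra ℂ (MatC n) := Subalgebra.centralizer ℂ (M : Set (MatC n))

/-- The double commutant. -/
def NN' : Subalgebra ℂ (MatC n) := Subalgebra.centralizer ℂ ((NN M : Set (MatC n)))

variable {M}

lemma mem_NN_iff {Y : MatC n} : Y ∈ NN M ↔ ∀ A ∈ M, Y * A = A * Y := by
  rw [NN, Subalgebra.mem_centralizer_iff]
  exact ⟨fun h A hA => (h A hA).symm, fun h A hA => (h A hA).symm⟩

lemma mem_NN'_iff {Y : MatC n} : Y ∈ NN' M ↔ ∀ Z ∈ NN M, Z * Y = Y * Z := by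
  rw [NN', Subalgebra.mem_centralizer_iff]
  rfl

lemma NN_star {x : MatC n} (hx : x ∈ NN M) : xᴴ ∈ NN M := by
  rw [mem_NN_iff] at hx ⊢
  intro A hA
  have h := hx Aᴴ (star_mem hA)
  have h2 := congrArg conjTranspose h
  rw [conjTranspose_mul, conjTranspose_mul, conjTranspose_conjTranspose] at h2
  exact h2.symm

lemma NN'_star {x : MatC n} (hx : x ∈ NN' M) : xᴴ ∈ NN' M := by
  rw [mem_NN'_iff] at hx ⊢
  intro Z hZ
  have h := hx Zᴴ (NN_star hZ)
  have h2 := congrArg conjTranspose h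
  rw [conjTranspose_mul, conjTranspose_mul, conjTranspose_conjTranspose] at h2
  exact h2.symm

lemma M_le_NN' {A : MatC n} (hA : A ∈ M) : A ∈ NN' M := by
  rw [mem_NN'_iff]
  intro Z hZ
  exact mem_NN_iff.mp hZ A hA

variable {B : Fin m → MatC n} (hB : ONFam (NN M) B)

lemma casimir_star (hB : ONFam (NN M) B) : (casimir B)ᴴ = casimir B := by
  unfold casimir
  rw [conjTranspose_sum]
  exact Finset.sum_congr rfl fun s _ => by
    rw [conjTranspose_mul, conjTranspose_conjTranspose]

lemma casimir_mem (hB : ONFam (NN M) B) : casimir B ∈ NN M :=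
  Subalgebra.sum_mem _ fun s _ =>
    Subalgebra.mul_mem _ (hB.mem s) (NN_star (hB.mem s))

lemma casimir_comm (hB : ONFam (NN M) B) {Z : MatC n} (hZ : Z ∈ NN M) :
    Z * casimir B = casimir B * Z := by
  have h := hB.psi_comm (fun x hx => NN_star hx) hZ 1
  simpa [Matrix.mul_one, casimir] using h

lemma casimir_det (hB : ONFam (NN M) B) : IsUnit (casimir B).det := by
  rw [isUnit_iff_ne_zero]
  intro h0
  obtain ⟨v, hv0, hv⟩ := (Matrix.exists_mulVec_eq_zero_iff).mpr h0
  exact hv0 (casimir_mulVec_eq_zero hB v hv)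

lemma casimir_alt (hB : ONFam (NN M) B) : ∑ s, (B s)ᴴ * B s = casimir B := by
  have h := (hB.star (fun x hx => NN_star hx)).casimir_indep hB
  unfold casimir at h ⊢
  simpa [conjTranspose_conjTranspose] using h


section Inverse

lemma W_mul (hB : ONFam (NN M) B) : casimir B * (casimir B)⁻¹ = 1 :=
  Matrix.mul_nonsing_inv _ (casimir_det hB)

lemma mul_W (hB : ONFam (NN M) B) : (casimir B)⁻¹ * casimir B = 1 :=
  Matrix.nonsing_inv_mul _ (casimir_det hB)

lemma W_star (hB : ONFam (NN M) B) : ((casimir B)⁻¹)ᴴ = (casimir B)⁻¹ := by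
  rw [Matrix.conjTranspose_nonsing_inv, casimir_star hB]

lemma W_comm (hB : ONFam (NN M) B) {Z : MatC n} (hZ : Z ∈ NN M) :
    Z * (casimir B)⁻¹ = (casimir B)⁻¹ * Z := by
  set W := (casimir B)⁻¹
  calc Z * W = (W * casimir B) * Z * W := by rw [mul_W hB]; rw [Matrix.one_mul]
    _ = W * (Z * casimir B) * W := by
        rw [casimir_comm hB hZ]
        simp only [Matrix.mul_assoc]
    _ = W * Z * (casimir B * W) := by simp only [Matrix.mul_assoc]
    _ = W * Z := by rw [W_mul hB, Matrix.mul_one]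

lemma W_mem (hB : ONFam (NN M) B) : (casimir B)⁻¹ ∈ NN M := by
  rw [mem_NN_iff]
  intro A hA
  set W := (casimir B)⁻¹
  have hCA : casimir B * A = A * casimir B := (mem_NN_iff.mp (casimir_mem hB) A hA)
  calc W * A = W * A * (casimir B * W) := by rw [W_mul hB, Matrix.mul_one]
    _ = W * (A * casimir B) * W := by simp only [Matrix.mul_assoc]
    _ = W * (casimir B * A) * W := by rw [hCA]
    _ = (W * casimir B) * (A * W) := by simp only [Matrix.mul_assoc]
    _ = A * W := by rw [mul_W hB, Matrix.one_mul]

/-- The key resummation identity `∑ s Bsᴴ W Bs W = W`. -/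
lemma key_resum (hB : ONFam (NN M) B) :
    ∑ s, (B s)ᴴ * ((casimir B)⁻¹ * B s * (casimir B)⁻¹) = (casimir B)⁻¹ := by
  set W := (casimir B)⁻¹
  have hWB : ∀ s, W * B s = B s * W := fun s => (W_comm hB (hB.mem s)).symm
  calc ∑ s, (B s)ᴴ * (W * B s * W)
      = ∑ s, ((B s)ᴴ * B s) * (W * W) := by
        refine Finset.sum_congr rfl fun s _ => ?_
        rw [hWB s]
        simp only [Matrix.mul_assoc]
    _ = (∑ s, (B s)ᴴ * B s) * (W * W) := by rw [Matrix.sum_mul]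
    _ = casimir B * (W * W) := by rw [casimir_alt hB]
    _ = (casimir B * W) * W := by simp only [Matrix.mul_assoc]
    _ = W := by rw [W_mul hB, Matrix.one_mul]

/-- Orthogonality of the sandwiched defect to the commutant. -/
lemma sandwich_perp (hB : ONFam (NN M) B) (x : MatC n) {Z : MatC n} (hZ : Z ∈ NN M) :
    (Zᴴ * ((casimir B)⁻¹ * x * (casimir B)⁻¹
      - ∑ s, ((B s)ᴴ * x).trace • ((casimir B)⁻¹ * B s * (casimir B)⁻¹))).trace = 0 := by
  set W := (casimir B)⁻¹
  have hperp0 : ∀ Z' ∈ NN M, (Z'ᴴ * (x - ∑ s, ((B s)ᴴ * x).trace • B s)).trace = 0 := by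
    intro Z' hZ'
    rw [Matrix.mul_sub, Matrix.trace_sub, sub_eq_zero]
    rw [Matrix.mul_sum, Matrix.trace_sum]
    symm
    calc ∑ s, (Z'ᴴ * (((B s)ᴴ * x).trace • B s)).trace
        = ∑ s, (Z'ᴴ * B s).trace * ((B s)ᴴ * x).trace := by
          refine Finset.sum_congr rfl fun s _ => ?_
          rw [Matrix.mul_smul, Matrix.trace_smul]
          rw [smul_eq_mul, mul_comm]
      _ = (Z'ᴴ * x).trace := hB.parseval hZ' x
  -- rewrite the matrix inside
  have hmat : W * x * W - ∑ s, ((B s)ᴴ * x).trace • (W * B s * W)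
      = W * (x - ∑ s, ((B s)ᴴ * x).trace • B s) * W := by
    rw [Matrix.mul_sub, Matrix.sub_mul]
    congr 1
    rw [Matrix.mul_sum, Matrix.sum_mul]
    refine Finset.sum_congr rfl fun s _ => ?_
    rw [Matrix.mul_smul, Matrix.smul_mul]
  rw [hmat]
  set y := x - ∑ s, ((B s)ᴴ * x).trace • B s
  have hZ2 : W * Z * W ∈ NN M :=
    Subalgebra.mul_mem _ (Subalgebra.mul_mem _ (W_mem hB) hZ) (W_mem hB)
  have h3 : (Zᴴ * (W * y * W)).trace = ((W * Z * W)ᴴ * y).trace := by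
    rw [conjTranspose_mul, conjTranspose_mul, W_star hB]
    rw [show Zᴴ * (W * y * W) = (Zᴴ * W * y) * W by simp only [Matrix.mul_assoc]]
    rw [Matrix.trace_mul_comm]
    simp only [Matrix.mul_assoc]
    rfl
  rw [h3]
  exact hperp0 _ hZ2

end Inverse


section Count

lemma trace_entries (A B : MatC n) :
    (Aᴴ * B).trace = ∑ j, ∑ i, star (A i j) * B i j := by
  simp [Matrix.trace, Matrix.mul_apply, Matrix.conjTranspose_apply, Matrix.diag_apply]

lemma traceE (A : MatC n) (i j : Fin n) :
    (Aᴴ * Matrix.single i j (1:ℂ)).trace = star (A i j) := by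
  rw [trace_entries]
  rw [Finset.sum_eq_single j]
  · rw [Finset.sum_eq_single i]
    · simp [Matrix.single]
    · intro b _ hb; simp [Matrix.single, Ne.symm hb]
    · intro h; exact absurd (Finset.mem_univ i) h
  · intro b _ hb
    refine Finset.sum_eq_zero fun a _ => ?_
    simp [Matrix.single, Ne.symm hb]
  · intro h; exact absurd (Finset.mem_univ j) h

lemma sandwichE (U V : MatC n) (i j k l : Fin n) :
    (U * Matrix.single i j (1:ℂ) * V) k l = U k i * V j l := by
  rw [Matrix.mul_apply]
  rw [Finset.sum_eq_single j]
  · rw [Matrix.mul_apply, Finset.sum_eq_single i]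
    · simp [Matrix.single]
    · intro a _ ha; simp [Matrix.single, Ne.symm ha]
    · intro h; exact absurd (Finset.mem_univ i) h
  · intro b _ hb
    rw [Matrix.mul_apply]
    rw [Finset.sum_eq_zero]
    · simp
    · intro a _; simp [Matrix.single, Ne.symm hb]
  · intro h; exact absurd (Finset.mem_univ j) h


variable {d' : ℕ} {A : Fin d' → MatC n}

lemma psi_mem_NN' (hB : ONFam (NN M) B) (X : MatC n) :
    (∑ s, B s * X * (B s)ᴴ) ∈ NN' M := by
  rw [mem_NN'_iff]
  intro Z hZ
  exact hB.psi_comm (fun x hx => NN_star hx) hZ X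

lemma casimir_mem_NN' (hB : ONFam (NN M) B) : casimir B ∈ NN' M := by
  rw [mem_NN'_iff]
  intro Z hZ
  exact casimir_comm hB hZ

lemma pairing1 (hB : ONFam (NN M) B) (X : MatC n) {B₀ : MatC n} (hB₀ : B₀ ∈ NN' M) :
    (B₀ᴴ * (∑ s, B s * X * (B s)ᴴ)).trace = (B₀ᴴ * (casimir B * X)).trace := by
  rw [Matrix.mul_sum, Matrix.trace_sum]
  have step : ∀ s, (B₀ᴴ * (B s * X * (B s)ᴴ)).trace = (B₀ᴴ * ((B s)ᴴ * B s * X)).trace := by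
    intro s
    have hcomm : (B s)ᴴ * B₀ᴴ = B₀ᴴ * (B s)ᴴ :=
      mem_NN'_iff.mp (NN'_star hB₀) _ (NN_star (hB.mem s))
    calc (B₀ᴴ * (B s * X * (B s)ᴴ)).trace
        = ((B₀ᴴ * (B s * X)) * (B s)ᴴ).trace := by simp only [Matrix.mul_assoc]
      _ = ((B s)ᴴ * (B₀ᴴ * (B s * X))).trace := Matrix.trace_mul_comm _ _
      _ = (((B s)ᴴ * B₀ᴴ) * (B s * X)).trace := by simp only [Matrix.mul_assoc]
      _ = ((B₀ᴴ * (B s)ᴴ) * (B s * X)).trace := by rw [hcomm]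
      _ = (B₀ᴴ * ((B s)ᴴ * B s * X)).trace := by simp only [Matrix.mul_assoc]
  rw [Finset.sum_congr rfl fun s _ => step s]
  rw [← Matrix.trace_sum, ← Matrix.mul_sum]
  congr 2
  rw [← Matrix.sum_mul, casimir_alt hB]

lemma pairing2 (hB : ONFam (NN M) B) (hA : ONFam (NN' M) A) (X : MatC n)
    {B₀ : MatC n} (hB₀ : B₀ ∈ NN' M) :
    (B₀ᴴ * (casimir B * (∑ t, ((A t)ᴴ * X).trace • A t))).trace
      = (B₀ᴴ * (casimir B * X)).trace := by
  have hCB₀ : casimir B * B₀ ∈ NN' M :=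
    Subalgebra.mul_mem _ (casimir_mem_NN' hB) hB₀
  have key := hA.parseval (x := casimir B * B₀) hCB₀ X
  calc (B₀ᴴ * (casimir B * (∑ t, ((A t)ᴴ * X).trace • A t))).trace
      = ∑ t, ((casimir B * B₀)ᴴ * A t).trace * ((A t)ᴴ * X).trace := by
        rw [Matrix.mul_sum, Matrix.mul_sum, Matrix.trace_sum]
        refine Finset.sum_congr rfl fun t _ => ?_
        rw [Matrix.mul_smul, Matrix.mul_smul, Matrix.trace_smul, smul_eq_mul, mul_comm]
        congr 1
        rw [conjTranspose_mul, casimir_star hB]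
        simp only [Matrix.mul_assoc]
    _ = ((casimir B * B₀)ᴴ * X).trace := key
    _ = (B₀ᴴ * (casimir B * X)).trace := by
        rw [conjTranspose_mul, casimir_star hB]
        simp only [Matrix.mul_assoc]

/-- Identity (A): `Ψ(X) = C · π'(X)`. -/
lemma identityA (hB : ONFam (NN M) B) (hA : ONFam (NN' M) A) (X : MatC n) :
    ∑ s, B s * X * (B s)ᴴ = casimir B * (∑ t, ((A t)ᴴ * X).trace • A t) := by
  set L := ∑ s, B s * X * (B s)ᴴ
  set R := casimir B * (∑ t, ((A t)ᴴ * X).trace • A t)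
  have hL : L ∈ NN' M := psi_mem_NN' hB X
  have hR : R ∈ NN' M := Subalgebra.mul_mem _ (casimir_mem_NN' hB)
    (Subalgebra.sum_mem _ fun t _ => Subalgebra.smul_mem _ (hA.mem t) _)
  have hΔ : L - R ∈ NN' M := Subalgebra.sub_mem _ hL hR
  have h0 : ((L - R)ᴴ * (L - R)).trace = 0 := by
    rw [Matrix.mul_sub, Matrix.trace_sub]
    rw [pairing1 hB X hΔ, pairing2 hB hA X hΔ]
    exact sub_self _
  have h1 := eq_zero_of_trace_sq _ h0
  exact sub_eq_zero.mp h1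


lemma trace_W_eq (hB : ONFam (NN M) B) (hA : ONFam (NN' M) A) :
    ((casimir B)⁻¹).trace = (d' : ℂ) := by
  classical
  set W := (casimir B)⁻¹ with hWdef
  have hpi : ∀ X : MatC n, (∑ t, ((A t)ᴴ * X).trace • A t)
      = W * (∑ s, B s * X * (B s)ᴴ) := by
    intro X
    rw [identityA hB hA X, ← Matrix.mul_assoc, mul_W hB, Matrix.one_mul]
  -- evaluate ∑_{ij} π'(E i j) i j two ways
  have way1 : ∑ i, ∑ j, (∑ t, ((A t)ᴴ * Matrix.single i j (1:ℂ)).trace • A t) i j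
      = (d' : ℂ) := by
    have h1 : ∀ i j, (∑ t, ((A t)ᴴ * Matrix.single i j (1:ℂ)).trace • A t) i j
        = ∑ t, star (A t i j) * (A t i j) := by
      intro i j
      rw [Matrix.sum_apply]
      refine Finset.sum_congr rfl fun t _ => ?_
      rw [Matrix.smul_apply, traceE, smul_eq_mul]
    calc ∑ i, ∑ j, (∑ t, ((A t)ᴴ * Matrix.single i j (1:ℂ)).trace • A t) i j
        = ∑ i, ∑ j, ∑ t, star (A t i j) * (A t i j) := by
          exact Finset.sum_congr rfl fun i _ => Finset.sum_congr rfl fun j _ => h1 i j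
      _ = ∑ i, ∑ t, ∑ j, star (A t i j) * (A t i j) := by
          exact Finset.sum_congr rfl fun i _ => Finset.sum_comm
      _ = ∑ t, ∑ i, ∑ j, star (A t i j) * (A t i j) := Finset.sum_comm
      _ = ∑ t, ∑ j, ∑ i, star (A t i j) * (A t i j) := by
          exact Finset.sum_congr rfl fun t _ => Finset.sum_comm
      _ = ∑ t : Fin d', (1:ℂ) := by
          refine Finset.sum_congr rfl fun t _ => ?_
          rw [← trace_entries (A t) (A t), hA.ortho t t, if_pos rfl]
      _ = (d' : ℂ) := by simp
  have way2 : ∑ i, ∑ j, (∑ t, ((A t)ᴴ * Matrix.single i j (1:ℂ)).trace • A t) i j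
      = W.trace := by
    have h2 : ∀ i j : Fin n, (∑ t, ((A t)ᴴ * Matrix.single i j (1:ℂ)).trace • A t) i j
        = ∑ s, ((W * B s) i i * (B s)ᴴ j j) := by
      intro i j
      rw [hpi, Matrix.mul_sum, Matrix.sum_apply]
      refine Finset.sum_congr rfl fun s _ => ?_
      rw [show W * (B s * Matrix.single i j (1:ℂ) * (B s)ᴴ)
          = (W * B s) * Matrix.single i j (1:ℂ) * (B s)ᴴ by
        simp only [Matrix.mul_assoc]]
      rw [sandwichE]
    calc ∑ i, ∑ j, (∑ t, ((A t)ᴴ * Matrix.single i j (1:ℂ)).trace • A t) i j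
        = ∑ i, ∑ j, ∑ s, ((W * B s) i i * (B s)ᴴ j j) :=
          Finset.sum_congr rfl fun i _ => Finset.sum_congr rfl fun j _ => h2 i j
      _ = ∑ i, ∑ s, ∑ j, ((W * B s) i i * (B s)ᴴ j j) := by
          exact Finset.sum_congr rfl fun i _ => Finset.sum_comm
      _ = ∑ s, ∑ i, ∑ j, ((W * B s) i i * (B s)ᴴ j j) := Finset.sum_comm
      _ = ∑ s, ((∑ i, (W * B s) i i) * (∑ j, ((B s)ᴴ) j j)) := by
          refine Finset.sum_congr rfl fun s _ => ?_
          rw [Finset.sum_mul_sum]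
      _ = ∑ s, ((B s)ᴴ).trace • (W * B s).trace := by
          refine Finset.sum_congr rfl fun s _ => ?_
          rw [smul_eq_mul, mul_comm]
          rfl
      _ = (W * ∑ s, ((B s)ᴴ).trace • B s).trace := by
          rw [Matrix.mul_sum, Matrix.trace_sum]
          refine Finset.sum_congr rfl fun s _ => ?_
          rw [Matrix.mul_smul, Matrix.trace_smul]
      _ = W.trace := by
          have hone : (∑ s, ((B s)ᴴ).trace • B s) = (1 : MatC n) := by
            have h6 := hB.expand 1 (Subalgebra.one_mem _)
            simpa [Matrix.mul_one] using h6
          rw [hone, Matrix.mul_one]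
  rw [← way2, way1]

end Count


/-- The packaged complex-matrix data needed for the hereditary counting argument. -/
theorem main_complex (M : StarSubalgebra ℂ (MatC n)) :
    ∃ (d : ℕ) (W : MatC n) (m : ℕ) (K G : Fin m → MatC n),
      Module.finrank ℂ M ≤ d ∧
      Wᴴ = W ∧
      W.trace = (d : ℂ) ∧
      (∀ s, ∀ A ∈ M, (G s) * A = A * (G s)) ∧
      (∑ s, (K s)ᴴ * G s = W) ∧
      (∀ i j : Fin n, ∀ Z : MatC n, (∀ A ∈ M, Z * A = A * Z) →
        (Zᴴ * (W * Matrix.single i j (1:ℂ) * W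
          - ∑ s, Star.star (K s i j) • G s)).trace = 0) := by
  classical
  obtain ⟨B, hB⟩ := exists_onfam (NN M)
  obtain ⟨A, hA⟩ := exists_onfam (NN' M)
  set W := (casimir B)⁻¹ with hW
  refine ⟨Module.finrank ℂ (Subalgebra.toSubmodule (NN' M)), W, _, B,
    fun s => W * B s * W, ?_, ?_, ?_, ?_, ?_, ?_⟩
  · -- finrank M ≤ finrank NN'
    let f : M →ₗ[ℂ] (Subalgebra.toSubmodule (NN' M)) :=
      { toFun := fun x => ⟨(x : MatC n), M_le_NN' x.2⟩
        map_add' := fun x y => by ext : 1; simp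
        map_smul' := fun c x => by ext : 1; simp }
    have hf : Function.Injective f := by
      intro x y hxy
      have : ((f x : MatC n)) = ((f y : MatC n)) := by rw [hxy]
      exact Subtype.ext this
    exact LinearMap.finrank_le_finrank_of_injective hf
  · exact W_star hB
  · exact trace_W_eq hB hA
  · intro s A hA'
    have h1 : W * B s * W ∈ NN M :=
      Subalgebra.mul_mem _ (Subalgebra.mul_mem _ (W_mem hB) (hB.mem s)) (W_mem hB)
    exact mem_NN_iff.mp h1 A hA'
  · exact key_resum hB
  · intro i j Z hZ
    have hZm : Z ∈ NN M := mem_NN_iff.mpr hZ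
    have h := sandwich_perp hB (Matrix.single i j (1:ℂ)) hZm
    have hco : ∀ s, ((B s)ᴴ * Matrix.single i j (1:ℂ)).trace = Star.star (B s i j) :=
      fun s => traceE (B s) i j
    rw [Finset.sum_congr rfl fun s _ => by rw [hco s]] at h
    exact h

end Commutant


section Aside

variable {𝒜 : Type*} [Ring 𝒜] [Algebra ℂ 𝒜] [StarRing 𝒜] [StarModule ℂ 𝒜]

/-- Weighted-conjugate entry sum equals a trace. -/
lemma conj_weight_sum (K : MatC n) (Q : Matrix (Fin n) (Fin n) 𝒜) :
    ∑ u, ∑ v, (algebraMap ℂ 𝒜) (Star.star (K u v)) * Q u v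
      = ((Kᴴ.map (algebraMap ℂ 𝒜)) * Q).trace := by
  rw [Matrix.trace]
  rw [show ∑ v, ((Kᴴ.map (algebraMap ℂ 𝒜)) * Q).diag v
      = ∑ v, ∑ u, (algebraMap ℂ 𝒜) (Star.star (K u v)) * Q u v from
    Finset.sum_congr rfl fun v _ => by
      rw [Matrix.diag_apply, Matrix.mul_apply]
      exact Finset.sum_congr rfl fun u _ => by
        rw [Matrix.map_apply, Matrix.conjTranspose_apply]]
  exact Finset.sum_comm

/-- Scalar juggling for algebra maps. -/
lemma term_eq (z w : ℂ) (q r : 𝒜) :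
    q * (algebraMap ℂ 𝒜) (z * w) * r = ((algebraMap ℂ 𝒜) z * q) * ((algebraMap ℂ 𝒜) w * r) := by
  rw [_root_.map_mul]
  calc q * ((algebraMap ℂ 𝒜) z * (algebraMap ℂ 𝒜) w) * r
      = (q * (algebraMap ℂ 𝒜) z) * ((algebraMap ℂ 𝒜) w * r) := by simp only [mul_assoc]
    _ = ((algebraMap ℂ 𝒜) z * q) * ((algebraMap ℂ 𝒜) w * r) := by rw [← Algebra.commutes]

/-- Core idempotency computation. -/
lemma S_idem {mS : ℕ} (W : MatC n) (K G : Fin mS → MatC n)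
    (Q : Matrix (Fin n) (Fin n) 𝒜)
    (hQQ : Q * Q = Q)
    (hKG : ∑ s, (K s)ᴴ * G s = W)
    (hx1comm : ∀ i j : Fin n,
      Q * ((∑ s, Star.star (K s i j) • G s).map (algebraMap ℂ 𝒜))
        = ((∑ s, Star.star (K s i j) • G s).map (algebraMap ℂ 𝒜)) * Q)
    (hx2perp : ∀ i j : Fin n,
      Q * ((W * Matrix.single i j (1:ℂ) * W
        - ∑ s, Star.star (K s i j) • G s).map (algebraMap ℂ 𝒜)) * Q = 0) :
    ((W.map (algebraMap ℂ 𝒜)) * Q).trace * ((W.map (algebraMap ℂ 𝒜)) * Q).trace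
      = ((W.map (algebraMap ℂ 𝒜)) * Q).trace := by
  classical
  set ι := algebraMap ℂ 𝒜 with hι
  set x₁ : Fin n → Fin n → MatC n := fun i j => ∑ s, Star.star (K s i j) • G s with hx₁
  -- Step A : product as a double-entry sum of sandwiches
  have stepA : ((W.map ι) * Q).trace * ((W.map ι) * Q).trace
      = ∑ i, ∑ j, (Q * ((W * Matrix.single i j (1:ℂ) * W).map ι) * Q) i j := by
    have lhs_eq : ∀ k l : Fin n, ((W.map ι * Q).diag k) * ((W.map ι * Q).diag l)
        = ∑ i, ∑ j, (ι (W k i) * Q i k) * (ι (W l j) * Q j l) := by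
      intro k l
      rw [Matrix.diag_apply, Matrix.diag_apply, Matrix.mul_apply, Matrix.mul_apply]
      rw [Finset.sum_mul_sum]
      exact Finset.sum_congr rfl fun i _ => Finset.sum_congr rfl fun j _ => by
        rw [Matrix.map_apply, Matrix.map_apply]
    have rhs_eq : ∀ i j : Fin n,
        (Q * ((W * Matrix.single i j (1:ℂ) * W).map ι) * Q) i j
          = ∑ k, ∑ l, (ι (W k i) * Q i k) * (ι (W j l) * Q l j) := by
      intro i j
      rw [Matrix.mul_apply]
      calc ∑ l, (Q * (W * Matrix.single i j (1:ℂ) * W).map ι) i l * Q l j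
          = ∑ l, ∑ k, (Q i k * ι (W k i * W j l)) * Q l j := by
            refine Finset.sum_congr rfl fun l _ => ?_
            rw [Matrix.mul_apply, Finset.sum_mul]
            refine Finset.sum_congr rfl fun k _ => ?_
            rw [Matrix.map_apply, sandwichE]
        _ = ∑ k, ∑ l, (Q i k * ι (W k i * W j l)) * Q l j := Finset.sum_comm
        _ = ∑ k, ∑ l, (ι (W k i) * Q i k) * (ι (W j l) * Q l j) := by
            refine Finset.sum_congr rfl fun k _ => Finset.sum_congr rfl fun l _ => ?_
            rw [← term_eq]
    calc ((W.map ι) * Q).trace * ((W.map ι) * Q).trace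
        = ∑ k, ∑ l, ((W.map ι * Q).diag k) * ((W.map ι * Q).diag l) := by
          show (∑ k, (W.map ι * Q).diag k) * (∑ l, (W.map ι * Q).diag l) = _
          rw [Finset.sum_mul_sum]
      _ = ∑ k, ∑ l, ∑ i, ∑ j, (ι (W k i) * Q i k) * (ι (W l j) * Q j l) :=
          Finset.sum_congr rfl fun k _ => Finset.sum_congr rfl fun l _ => lhs_eq k l
      _ = ∑ k, ∑ i, ∑ l, ∑ j, (ι (W k i) * Q i k) * (ι (W l j) * Q j l) :=
          Finset.sum_congr rfl fun k _ => Finset.sum_comm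
      _ = ∑ i, ∑ k, ∑ l, ∑ j, (ι (W k i) * Q i k) * (ι (W l j) * Q j l) := Finset.sum_comm
      _ = ∑ i, ∑ j, ∑ k, ∑ l, (ι (W k i) * Q i k) * (ι (W j l) * Q l j) :=
          Finset.sum_congr rfl fun i _ => Finset.sum_comm
      _ = ∑ i, ∑ j, (Q * ((W * Matrix.single i j (1:ℂ) * W).map ι) * Q) i j :=
          Finset.sum_congr rfl fun i _ => Finset.sum_congr rfl fun j _ => (rhs_eq i j).symm
  -- Step B : replace each sandwich using the perp and commutation hypotheses
  have stepB : ∀ i j : Fin n,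
      Q * ((W * Matrix.single i j (1:ℂ) * W).map ι) * Q
        = ((x₁ i j).map ι) * Q := by
    intro i j
    have hsplit : W * Matrix.single i j (1:ℂ) * W
        = x₁ i j + (W * Matrix.single i j (1:ℂ) * W - x₁ i j) := by abel
    have hmapadd : (W * Matrix.single i j (1:ℂ) * W).map ι
        = (x₁ i j).map ι + (W * Matrix.single i j (1:ℂ) * W - x₁ i j).map ι := by
      conv_lhs => rw [hsplit]
      exact Matrix.map_add ι (fun a b => map_add ι a b) _ _
    rw [hmapadd, Matrix.mul_add, Matrix.add_mul, hx2perp i j, add_zero]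
    rw [hx1comm i j, Matrix.mul_assoc, hQQ]
  -- Step C : resum
  have stepC : ∑ i, ∑ j, (((x₁ i j).map ι) * Q) i j = ((W.map ι) * Q).trace := by
    have hterm : ∀ i j : Fin n, (((x₁ i j).map ι) * Q) i j
        = ∑ s, ι (Star.star (K s i j)) * (((G s).map ι) * Q) i j := by
      intro i j
      rw [Matrix.mul_apply]
      calc ∑ l, ((x₁ i j).map ι) i l * Q l j
          = ∑ l, ∑ s, ι (Star.star (K s i j)) * (ι ((G s) i l) * Q l j) := by
            refine Finset.sum_congr rfl fun l _ => ?_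
            rw [Matrix.map_apply]
            have hent : (x₁ i j) i l = ∑ s, Star.star (K s i j) * (G s) i l := by
              simp only [hx₁, Matrix.sum_apply, Matrix.smul_apply, smul_eq_mul]
            rw [hent, map_sum, Finset.sum_mul]
            refine Finset.sum_congr rfl fun s _ => ?_
            rw [_root_.map_mul, mul_assoc]
        _ = ∑ s, ∑ l, ι (Star.star (K s i j)) * (ι ((G s) i l) * Q l j) := Finset.sum_comm
        _ = ∑ s, ι (Star.star (K s i j)) * (((G s).map ι) * Q) i j := by
            refine Finset.sum_congr rfl fun s _ => ?_
            simp only [Matrix.mul_apply, Matrix.map_apply, Finset.mul_sum]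
    calc ∑ i, ∑ j, (((x₁ i j).map ι) * Q) i j
        = ∑ i, ∑ j, ∑ s, ι (Star.star (K s i j)) * (((G s).map ι) * Q) i j :=
          Finset.sum_congr rfl fun i _ => Finset.sum_congr rfl fun j _ => hterm i j
      _ = ∑ i, ∑ s, ∑ j, ι (Star.star (K s i j)) * (((G s).map ι) * Q) i j :=
          Finset.sum_congr rfl fun i _ => Finset.sum_comm
      _ = ∑ s, ∑ i, ∑ j, ι (Star.star (K s i j)) * (((G s).map ι) * Q) i j := Finset.sum_comm
      _ = ∑ s, (((K s)ᴴ.map ι) * (((G s).map ι) * Q)).trace :=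
          Finset.sum_congr rfl fun s _ => conj_weight_sum (K s) _
      _ = ∑ s, ((((K s)ᴴ * G s).map ι) * Q).trace := by
          refine Finset.sum_congr rfl fun s _ => ?_
          rw [Matrix.map_mul, Matrix.mul_assoc]
      _ = (((∑ s, (K s)ᴴ * G s).map ι) * Q).trace := by
          rw [show ((∑ s, (K s)ᴴ * G s).map ι) = ∑ s, ((K s)ᴴ * G s).map ι from ?_]
          · rw [Matrix.sum_mul, Matrix.trace_sum]
          · funext u v
            rw [Matrix.map_apply, Matrix.sum_apply, Matrix.sum_apply, map_sum]
            exact Finset.sum_congr rfl fun s _ => rfl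
      _ = ((W.map ι) * Q).trace := by rw [hKG]
  rw [stepA]
  have hfin : (∑ i, ∑ j, (Q * ((W * Matrix.single i j (1:ℂ) * W).map ι) * Q) i j)
      = ∑ i, ∑ j, (((x₁ i j).map ι) * Q) i j :=
    Finset.sum_congr rfl fun i _ => Finset.sum_congr rfl fun j _ => by rw [stepB i j]
  rw [hfin]
  exact stepC


lemma trace_mul_entries (X : MatC n) (Q : Matrix (Fin n) (Fin n) 𝒜) :
    ((X.map (algebraMap ℂ 𝒜)) * Q).trace = ∑ k, ∑ i, (algebraMap ℂ 𝒜) (X k i) * Q i k := by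
  simp only [Matrix.trace, Matrix.diag_apply, Matrix.mul_apply, Matrix.map_apply]

end Aside

end HCol

theorem hereditary_coloring_needs_dim_colors' {n : ℕ}
    (M : StarSubalgebra ℂ (Matrix (Fin n) (Fin n) ℂ))
    (𝒜 : Type*) [Ring 𝒜] [Algebra ℂ 𝒜] [StarRing 𝒜] [StarModule ℂ 𝒜]
    (h𝒜nz : (1 : 𝒜) ≠ 0)
    (h𝒜her : ∀ (N : ℕ) (x : Fin N → 𝒜), ∑ i, star (x i) * x i = 0 → ∀ i, x i = 0)
    (c : ℕ)
    (P : Fin c → Matrix (Fin n) (Fin n) 𝒜)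
    (hadj : ∀ a, (P a)ᴴ = P a)
    (hidem : ∀ a, P a * P a = P a)
    (horth : ∀ a b, a ≠ b → P a * P b = 0)
    (hsum : ∑ a, P a = 1)
    (hcomm : ∀ (a : Fin c) (Y : Matrix (Fin n) (Fin n) ℂ), (∀ A ∈ M, Y * A = A * Y) →
      P a * Y.map (algebraMap ℂ 𝒜) = Y.map (algebraMap ℂ 𝒜) * P a)
    (hperp : ∀ (a : Fin c) (X : Matrix (Fin n) (Fin n) ℂ),
      (∀ Y : Matrix (Fin n) (Fin n) ℂ, (∀ A ∈ M, Y * A = A * Y) → (Yᴴ * X).trace = 0) →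
      P a * X.map (algebraMap ℂ 𝒜) * P a = 0) :
    Module.finrank ℂ M ≤ c := by
  classical
  obtain ⟨d, W, m, K, G, hrank, hWstar, hWtr, hGcomm, hKG, hperpC⟩ := HCol.main_complex M
  set ι := algebraMap ℂ 𝒜 with hι
  set S : Fin c → 𝒜 := fun a => ((W.map ι) * P a).trace with hS
  -- idempotency
  have hSidem : ∀ a, S a * S a = S a := by
    intro a
    refine HCol.S_idem W K G (P a) (hidem a) hKG ?_ ?_
    · intro i j
      refine hcomm a _ ?_
      intro A hA
      calc (∑ s, Star.star (K s i j) • G s) * A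
          = ∑ s, Star.star (K s i j) • (G s * A) := by
            rw [Matrix.sum_mul]
            exact Finset.sum_congr rfl fun s _ => Matrix.smul_mul _ _ _
        _ = ∑ s, Star.star (K s i j) • (A * G s) := by
            exact Finset.sum_congr rfl fun s _ => by rw [hGcomm s A hA]
        _ = A * (∑ s, Star.star (K s i j) • G s) := by
            rw [Matrix.mul_sum]
            exact Finset.sum_congr rfl fun s _ => (Matrix.mul_smul _ _ _).symm
    · intro i j
      exact hperp a _ (fun Y hY => hperpC i j Y hY)
  -- self-adjointness
  have hSstar : ∀ a, star (S a) = S a := by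
    intro a
    have h1 : S a = ∑ k, ∑ i, ι (W k i) * P a i k := HCol.trace_mul_entries W (P a)
    rw [h1, star_sum]
    have h2 : ∀ k, star (∑ i, ι (W k i) * P a i k) = ∑ i, ι (W i k) * P a k i := by
      intro k
      rw [star_sum]
      refine Finset.sum_congr rfl fun i _ => ?_
      rw [StarMul.star_mul]
      have h3 : star (P a i k) = P a k i := by
        rw [show star (P a i k) = (P a)ᴴ k i from rfl, hadj a]
      have h4 : star (ι (W k i)) = ι (W i k) := by
        rw [← algebraMap_star_comm]
        congr 1
        rw [show Star.star (W k i) = Wᴴ i k from rfl, hWstar]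
      rw [h3, h4, ← Algebra.commutes]
    rw [Finset.sum_congr rfl fun k _ => h2 k]
    exact Finset.sum_comm
  -- sum of the S equals d
  have hSsum : ∑ a, S a = (d : 𝒜) := by
    have h1 : ∑ a, S a = ((W.map ι) * ∑ a, P a).trace := by
      rw [Matrix.mul_sum, Matrix.trace_sum]
    rw [h1, hsum, Matrix.mul_one]
    have h2 : (W.map ι).trace = ι (W.trace) := by
      simp only [Matrix.trace, Matrix.diag_apply, Matrix.map_apply, map_sum]
    rw [h2, hWtr]
    exact map_natCast ι d
  -- final counting
  refine le_trans hrank ?_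
  by_contra hdc
  push_neg at hdc
  set β := d - c with hβ
  have hβpos : 0 < β := Nat.sub_pos_of_lt hdc
  set x : Fin (c + β) → 𝒜 := fun i => if h : (i : ℕ) < c then 1 - S ⟨i, h⟩ else 1 with hx
  have hsum0 : ∑ i, star (x i) * x i = 0 := by
    rw [Fin.sum_univ_add]
    have hleft : ∀ a : Fin c, star (x (Fin.castAdd β a)) * x (Fin.castAdd β a) = 1 - S a := by
      intro a
      have hlt : ((Fin.castAdd β a : Fin (c + β)) : ℕ) < c := a.2
      rw [hx]
      simp only [dif_pos hlt]
      have ha : (⟨((Fin.castAdd β a : Fin (c + β)) : ℕ), hlt⟩ : Fin c) = a := by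
        apply Fin.ext; rfl
      rw [ha]
      rw [star_sub, star_one, hSstar a]
      rw [sub_mul, one_mul, mul_sub, mul_one, hSidem a]
      abel
    have hright : ∀ b : Fin β, star (x (Fin.natAdd c b)) * x (Fin.natAdd c b) = 1 := by
      intro b
      have hnlt : ¬ ((Fin.natAdd c b : Fin (c + β)) : ℕ) < c := by
        simp [Fin.natAdd]
      rw [hx]
      simp only [dif_neg hnlt]
      rw [star_one, one_mul]
    rw [Finset.sum_congr rfl fun a _ => hleft a, Finset.sum_congr rfl fun b _ => hright b]
    rw [Finset.sum_sub_distrib, hSsum]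
    rw [Finset.sum_const, Finset.sum_const]
    simp only [Finset.card_univ, Fintype.card_fin, nsmul_eq_mul, mul_one]
    rw [hβ, Nat.cast_sub hdc.le]
    abel
  have hzero := h𝒜her (c + β) x hsum0 (Fin.natAdd c ⟨0, hβpos⟩)
  have : (1 : 𝒜) = 0 := by
    have hnlt : ¬ ((Fin.natAdd c (⟨0, hβpos⟩ : Fin β) : Fin (c + β)) : ℕ) < c := by
      simp [Fin.natAdd]
    rw [hx] at hzero
    simpa [dif_neg hnlt] using hzero
  exact h𝒜nz this

/-- **Theorem (hereditary colorings of complete quantum graphs need `dim M` colors).**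
Let `M ⊆ M_n(ℂ)` be a unital *-subalgebra with commutant `M'` and let `𝒜` be a nonzero
hereditary unital *-algebra over `ℂ`.  If `P_1, …, P_c ∈ M_n(𝒜)` are mutually orthogonal
self-adjoint idempotents summing to the identity which commute with `Y ⊗ 1_𝒜` for every
`Y ∈ M'` (i.e. `P_a ∈ M ⊗ 𝒜`) and satisfy `P_a (X ⊗ 1_𝒜) P_a = 0` for every `X ⊥ M'`,
then `c ≥ dim_ℂ M`. -/
theorem hereditary_coloring_needs_dim_colors {n : ℕ}
    (M : StarSubalgebra ℂ (Matrix (Fin n) (Fin n) ℂ))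
    (𝒜 : Type*) [Ring 𝒜] [Algebra ℂ 𝒜] [StarRing 𝒜] [StarModule ℂ 𝒜]
    (h𝒜nz : (1 : 𝒜) ≠ 0)
    (h𝒜her : ∀ (N : ℕ) (x : Fin N → 𝒜), ∑ i, star (x i) * x i = 0 → ∀ i, x i = 0)
    (c : ℕ)
    (P : Fin c → Matrix (Fin n) (Fin n) 𝒜)
    (hadj : ∀ a, (P a)ᴴ = P a)
    (hidem : ∀ a, P a * P a = P a)
    (horth : ∀ a b, a ≠ b → P a * P b = 0)
    (hsum : ∑ a, P a = 1)
    (hcomm : ∀ (a : Fin c) (Y : Matrix (Fin n) (Fin n) ℂ), (∀ A ∈ M, Y * A = A * Y) →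
      P a * Y.map (algebraMap ℂ 𝒜) = Y.map (algebraMap ℂ 𝒜) * P a)
    (hperp : ∀ (a : Fin c) (X : Matrix (Fin n) (Fin n) ℂ),
      (∀ Y : Matrix (Fin n) (Fin n) ℂ, (∀ A ∈ M, Y * A = A * Y) → (Yᴴ * X).trace = 0) →
      P a * X.map (algebraMap ℂ 𝒜) * P a = 0) :
    Module.finrank ℂ M ≤ c :=
  hereditary_coloring_needs_dim_colors' M 𝒜 h𝒜nz h𝒜her c P hadj hidem horth hsum hcomm hperp
end

section
/- Let m ≥ 1 and let n_r, k_r ≥ 1 for 1 ≤ r ≤ m, with n = Σ_r n_r k_r; identify ℂ^n with the direct sum over r of ℂ^{n_r} ⊗ ℂ^{k_r} and let M ⊆ M_n(ℂ) be the block-diagonal algebra whose r-th block is ℂ I_{n_r} ⊗ M_{k_r}(ℂ), so that M' has r-th block M_{n_r}(ℂ) ⊗ ℂ I_{k_r} and D := dim_ℂ M = Σ_r k_r². Let 𝒜 be a nonzero hereditary unital *-algebra over ℂ, and let P_1, …, P_D ∈ M_n(𝒜) be self-adjoint idempotents with P_a P_b = 0 for a ≠ b and Σ_a P_a = I_n ⊗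 1_𝒜, each commuting with Y ⊗ 1_𝒜 for all Y ∈ M', and satisfying P_a (X ⊗ 1_𝒜) P_a = 0 for every X ∈ M_n(ℂ) with Tr(Y* X) = 0 for all Y ∈ M'. Then for every a, Σ_{r=1}^m (k_r / (n_r D)) · (sum of the diagonal entries of P_a lying in the r-th block) = (1/D) · 1_𝒜; that is, (ψ_M ⊗ id_𝒜)(P_a) = (1/D) 1_𝒜, where ψ_M = ⊕_r (k_r/(n_r D)) Tr_{n_r k_r} is the Plancherel trace of M. -/
open Matrix

set_option synthInstance.maxHeartbeats 400000
set_option maxHeartbeats 1000000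

noncomputable section

/-- The index set of rows/columns for the block algebra
`M = ⊕_r ℂI_{n_r} ⊗ M_{k_r}`: the disjoint union over `r` of `{1,…,n_r} × {1,…,k_r}`. -/
abbrev BlockIdx (m : ℕ) (nr kr : Fin m → ℕ) : Type :=
  (r : Fin m) × (Fin (nr r) × Fin (kr r))

/-- Membership in the commutant `M' = ⊕_r M_{n_r} ⊗ ℂI_{k_r}` of the block algebra
`M = ⊕_r ℂI_{n_r} ⊗ M_{k_r}`: `Y ∈ M'` iff there are matrices `B_r ∈ M_{n_r}(ℂ)` with
`Y⟨r,(x,p)⟩⟨s,(y,q)⟩ = δ_{rs} δ_{pq} (B_r)_{xy}`. -/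
def InBlockCommutant {m : ℕ} {nr kr : Fin m → ℕ}
    (Y : Matrix (BlockIdx m nr kr) (BlockIdx m nr kr) ℂ) : Prop :=
  ∃ B : (r : Fin m) → Matrix (Fin (nr r)) (Fin (nr r)) ℂ,
    ∀ (r s : Fin m) (x : Fin (nr r)) (p : Fin (kr r)) (y : Fin (nr s)) (q : Fin (kr s)),
      Y ⟨r, (x, p)⟩ ⟨s, (y, q)⟩ =
        if h : r = s then (if h ▸ p = q then B s (h ▸ x) y else 0) else 0

variable {m : ℕ} {nr kr : Fin m → ℕ}

def BuMat (r : Fin m) (x y : Fin (nr r)) : ∀ t, Matrix (Fin (nr t)) (Fin (nr t)) ℂ :=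
  fun t => if h : r = t then h ▸ Matrix.single x y 1 else 0

def auxY (B : ∀ r, Matrix (Fin (nr r)) (Fin (nr r)) ℂ) :
    Matrix (BlockIdx m nr kr) (BlockIdx m nr kr) ℂ :=
  fun i j => if h : i.1 = j.1 then (if h ▸ i.2.2 = j.2.2 then B j.1 (h ▸ i.2.1) j.2.1 else 0) else 0

lemma auxY_mem (B : ∀ r, Matrix (Fin (nr r)) (Fin (nr r)) ℂ) :
    InBlockCommutant (auxY (m := m) (nr := nr) (kr := kr) B) :=
  ⟨B, fun _ _ _ _ _ _ => rfl⟩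

def Yu (r : Fin m) (x y : Fin (nr r)) : Matrix (BlockIdx m nr kr) (BlockIdx m nr kr) ℂ :=
  auxY (BuMat r x y)

lemma Yu_mem (r : Fin m) (x y : Fin (nr r)) : InBlockCommutant (Yu (kr := kr) r x y) :=
  auxY_mem _

lemma BuMat_same (r : Fin m) (x y : Fin (nr r)) : BuMat (nr := nr) r x y r = Matrix.single x y 1 := by
  simp [BuMat]

lemma BuMat_ne {r t : Fin m} (h : r ≠ t) (x y : Fin (nr r)) : BuMat (nr := nr) r x y t = 0 :=
  dif_neg h

lemma Yu_apply_same (r : Fin m) (x y u : Fin (nr r)) (p : Fin (kr r)) (v : Fin (nr r)) (q : Fin (kr r)) :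
    Yu (kr := kr) r x y ⟨r,(u,p)⟩ ⟨r,(v,q)⟩ = if u = x ∧ v = y ∧ p = q then 1 else 0 := by
  show (if h : r = r then (if h ▸ p = q then BuMat r x y r (h ▸ u) v else 0) else 0) = _
  rw [dif_pos rfl]
  rw [BuMat_same]
  simp only [Matrix.single, Matrix.of_apply]
  by_cases h1 : p = q <;> by_cases h2 : x = u <;> by_cases h3 : y = v <;>
    simp [h1, h2, h3, eq_comm]

lemma Yu_apply_row_ne {r s : Fin m} (hs : s ≠ r) (x y : Fin (nr r)) (u : Fin (nr s))
    (p : Fin (kr s)) (j : BlockIdx m nr kr) : Yu (kr := kr) r x y ⟨s,(u,p)⟩ j = 0 := by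
  obtain ⟨t, v, q⟩ := j
  show (if h : s = t then _ else (0:ℂ)) = 0
  by_cases h : s = t
  · subst h
    rw [dif_pos rfl, BuMat_ne (fun h' => hs h'.symm)]
    simp
  · rw [dif_neg h]

lemma Yu_apply_col_ne {r s : Fin m} (hs : s ≠ r) (x y : Fin (nr r)) (i : BlockIdx m nr kr)
    (v : Fin (nr s)) (q : Fin (kr s)) : Yu (kr := kr) r x y i ⟨s,(v,q)⟩ = 0 := by
  obtain ⟨t, u, p⟩ := i
  show (if h : t = s then _ else (0:ℂ)) = 0
  by_cases h : t = s
  · subst h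
    rw [dif_pos rfl, BuMat_ne (fun h' => hs h'.symm)]
    simp
  · rw [dif_neg h]

lemma Yu_apply_row_ne_x (r : Fin m) {x u : Fin (nr r)} (hu : u ≠ x) (y : Fin (nr r))
    (p : Fin (kr r)) (j : BlockIdx m nr kr) : Yu (kr := kr) r x y ⟨r,(u,p)⟩ j = 0 := by
  obtain ⟨t, v, q⟩ := j
  by_cases h : t = r
  · subst h
    rw [Yu_apply_same]
    simp [hu]
  · exact Yu_apply_col_ne h x y ⟨r,(u,p)⟩ v q


section Keys
variable {𝒜 : Type*} [Ring 𝒜] [Algebra ℂ 𝒜]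

lemma key1 (A : Matrix (BlockIdx m nr kr) (BlockIdx m nr kr) 𝒜)
    (r : Fin m) (x y : Fin (nr r)) (p : Fin (kr r)) (j : BlockIdx m nr kr) :
    ((Yu (kr := kr) r x y).map (algebraMap ℂ 𝒜) * A) ⟨r,(x,p)⟩ j = A ⟨r,(y,p)⟩ j := by
  rw [Matrix.mul_apply, Fintype.sum_eq_single (⟨r,(y,p)⟩ : BlockIdx m nr kr)]
  · rw [Matrix.map_apply, Yu_apply_same]
    simp
  · rintro ⟨s, v, q⟩ hne
    rw [Matrix.map_apply]
    by_cases hs : s = r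
    · subst hs
      rw [Yu_apply_same]
      have hne' : ¬(x = x ∧ v = y ∧ p = q) := by
        rintro ⟨-, h2, h3⟩
        exact hne (by subst h2; subst h3; rfl)
      rw [if_neg hne']
      simp
    · rw [Yu_apply_col_ne hs]
      simp

lemma key2 (A : Matrix (BlockIdx m nr kr) (BlockIdx m nr kr) 𝒜)
    (r : Fin m) (x y : Fin (nr r)) (i : BlockIdx m nr kr) {s : Fin m} (hs : s ≠ r)
    (v : Fin (nr s)) (q : Fin (kr s)) :
    (A * (Yu (kr := kr) r x y).map (algebraMap ℂ 𝒜)) i ⟨s,(v,q)⟩ = 0 := by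
  rw [Matrix.mul_apply]
  apply Finset.sum_eq_zero
  intro k _
  rw [Matrix.map_apply, Yu_apply_col_ne hs]
  simp

lemma key2' (A : Matrix (BlockIdx m nr kr) (BlockIdx m nr kr) 𝒜)
    (r : Fin m) {x u : Fin (nr r)} (hu : u ≠ x) (y : Fin (nr r)) (p : Fin (kr r))
    (j : BlockIdx m nr kr) :
    ((Yu (kr := kr) r x y).map (algebraMap ℂ 𝒜) * A) ⟨r,(u,p)⟩ j = 0 := by
  rw [Matrix.mul_apply]
  apply Finset.sum_eq_zero
  intro k _
  rw [Matrix.map_apply, Yu_apply_row_ne_x r hu]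
  simp

lemma key3 (A : Matrix (BlockIdx m nr kr) (BlockIdx m nr kr) 𝒜)
    (r : Fin m) (x y : Fin (nr r)) (q : Fin (kr r)) (i : BlockIdx m nr kr) :
    (A * (Yu (kr := kr) r x y).map (algebraMap ℂ 𝒜)) i ⟨r,(y,q)⟩ = A i ⟨r,(x,q)⟩ := by
  rw [Matrix.mul_apply, Fintype.sum_eq_single (⟨r,(x,q)⟩ : BlockIdx m nr kr)]
  · rw [Matrix.map_apply, Yu_apply_same]
    simp
  · rintro ⟨s, u, p⟩ hne
    rw [Matrix.map_apply]
    by_cases hs : s = r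
    · subst hs
      rw [Yu_apply_same]
      have hne' : ¬(u = x ∧ y = y ∧ p = q) := by
        rintro ⟨h2, -, h3⟩
        exact hne (by subst h2; subst h3; rfl)
      rw [if_neg hne']
      simp
    · rw [Yu_apply_row_ne hs]
      simp

lemma hmap_std (i j : BlockIdx m nr kr) :
    (Matrix.single i j (1:ℂ)).map (algebraMap ℂ 𝒜) = Matrix.single i j 1 := by
  ext u v
  simp [Matrix.map_apply, Matrix.single, apply_ite (algebraMap ℂ 𝒜)]

lemma htriple (A : Matrix (BlockIdx m nr kr) (BlockIdx m nr kr) 𝒜) (i j u v : BlockIdx m nr kr) :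
    (A * Matrix.single i j (1:𝒜) * A) u v = A u i * A j v := by
  rw [Matrix.mul_apply, Fintype.sum_eq_single j]
  · rw [Matrix.mul_single_apply_same, mul_one]
  · intro l hl
    rw [Matrix.mul_single_apply_of_ne _ _ _ _ _ hl, zero_mul]

lemma htrace (Y : Matrix (BlockIdx m nr kr) (BlockIdx m nr kr) ℂ) (i j : BlockIdx m nr kr) (c : ℂ) :
    (Yᴴ * Matrix.single i j c).trace = star (Y i j) * c := by
  rw [Matrix.trace, Fintype.sum_eq_single j]
  · rw [Matrix.diag_apply, Matrix.mul_single_apply_same, Matrix.conjTranspose_apply]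
  · intro u hu
    rw [Matrix.diag_apply, Matrix.mul_single_apply_of_ne _ _ _ _ _ hu]

end Keys

def diagIdx {m : ℕ} {nr kr : Fin m → ℕ} (hnr : ∀ r, 1 ≤ nr r)
    (z : (t : Fin m) × Fin (kr t)) : BlockIdx m nr kr :=
  ⟨z.1, (⟨0, hnr z.1⟩, z.2)⟩

/-- **Theorem (rigidity of minimal hereditary colorings).**  Let
`M = ⊕_r ℂ I_{n_r} ⊗ M_{k_r} ⊆ M_n(ℂ)` (so `M'` has `r`-th block `M_{n_r} ⊗ ℂ I_{k_r}` and
`D = dim_ℂ M = ∑_r k_r²`), let `𝒜` be a nonzero hereditary unital *-algebra over `ℂ`, and let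
`P_1, …, P_D ∈ M ⊗ 𝒜` be a hereditary `D`-coloring of the complete quantum graph
`(M_n, M, M_n)`.  Then for every `a`,
`(ψ_M ⊗ id_𝒜)(P_a) = ∑_r (k_r/(n_r D)) · (∑ diagonal entries of `P_a` in block r) = (1/D)·1_𝒜`,
where `ψ_M` is the Plancherel trace of `M`. -/
theorem minimal_hereditary_coloring_trace (m : ℕ) (hm : 1 ≤ m)
    (nr kr : Fin m → ℕ) (hnr : ∀ r, 1 ≤ nr r) (hkr : ∀ r, 1 ≤ kr r)
    (𝒜 : Type*) [Ring 𝒜] [Algebra ℂ 𝒜] [StarRing 𝒜] [StarModule ℂ 𝒜]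
    (h𝒜nz : (1 : 𝒜) ≠ 0)
    (h𝒜her : ∀ (N : ℕ) (x : Fin N → 𝒜), ∑ i, star (x i) * x i = 0 → ∀ i, x i = 0)
    (D : ℕ) (hD : D = ∑ r, (kr r) ^ 2)
    (P : Fin D → Matrix (BlockIdx m nr kr) (BlockIdx m nr kr) 𝒜)
    (hadj : ∀ a, (P a)ᴴ = P a)
    (hidem : ∀ a, P a * P a = P a)
    (horth : ∀ a b, a ≠ b → P a * P b = 0)
    (hsum : ∑ a, P a = 1)
    (hcomm : ∀ (a : Fin D) (Y : Matrix (BlockIdx m nr kr) (BlockIdx m nr kr) ℂ),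
      InBlockCommutant Y →
      P a * Y.map (algebraMap ℂ 𝒜) = Y.map (algebraMap ℂ 𝒜) * P a)
    (hperp : ∀ (a : Fin D) (X : Matrix (BlockIdx m nr kr) (BlockIdx m nr kr) ℂ),
      (∀ Y, InBlockCommutant Y → (Yᴴ * X).trace = 0) →
      P a * X.map (algebraMap ℂ 𝒜) * P a = 0) :
    ∀ a : Fin D,
      ∑ r : Fin m, ((kr r : ℂ) / ((nr r : ℂ) * (D : ℂ))) •
        (∑ x : Fin (nr r), ∑ p : Fin (kr r), P a ⟨r, (x, p)⟩ ⟨r, (x, p)⟩)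
      = ((D : ℂ))⁻¹ • (1 : 𝒜) := by
  -- Structure of P a: vanishing off the (r,x)-diagonal, and x-independence of diagonal blocks
  have L2a : ∀ (a : Fin D) (r s : Fin m) (x : Fin (nr r)) (p : Fin (kr r)) (y : Fin (nr s))
      (q : Fin (kr s)), r ≠ s → P a ⟨r,(x,p)⟩ ⟨s,(y,q)⟩ = 0 := by
    intro a r s x p y q hrs
    calc P a ⟨r,(x,p)⟩ ⟨s,(y,q)⟩
        = ((Yu (kr := kr) r x x).map (algebraMap ℂ 𝒜) * P a) ⟨r,(x,p)⟩ ⟨s,(y,q)⟩ :=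
          (key1 (P a) r x x p _).symm
      _ = (P a * (Yu (kr := kr) r x x).map (algebraMap ℂ 𝒜)) ⟨r,(x,p)⟩ ⟨s,(y,q)⟩ := by
          rw [hcomm a _ (Yu_mem r x x)]
      _ = 0 := key2 (P a) r x x _ (fun h => hrs h.symm) y q
  have L2b : ∀ (a : Fin D) (r : Fin m) (x y : Fin (nr r)) (p q : Fin (kr r)), x ≠ y →
      P a ⟨r,(x,p)⟩ ⟨r,(y,q)⟩ = 0 := by
    intro a r x y p q hxy
    calc P a ⟨r,(x,p)⟩ ⟨r,(y,q)⟩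
        = (P a * (Yu (kr := kr) r y y).map (algebraMap ℂ 𝒜)) ⟨r,(x,p)⟩ ⟨r,(y,q)⟩ :=
          (key3 (P a) r y y q _).symm
      _ = ((Yu (kr := kr) r y y).map (algebraMap ℂ 𝒜) * P a) ⟨r,(x,p)⟩ ⟨r,(y,q)⟩ := by
          rw [hcomm a _ (Yu_mem r y y)]
      _ = 0 := key2' (P a) r hxy y p _
  have L2c : ∀ (a : Fin D) (r : Fin m) (x y : Fin (nr r)) (p q : Fin (kr r)),
      P a ⟨r,(x,p)⟩ ⟨r,(x,q)⟩ = P a ⟨r,(y,p)⟩ ⟨r,(y,q)⟩ := by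
    intro a r x y p q
    calc P a ⟨r,(x,p)⟩ ⟨r,(x,q)⟩
        = (P a * (Yu (kr := kr) r x y).map (algebraMap ℂ 𝒜)) ⟨r,(x,p)⟩ ⟨r,(y,q)⟩ :=
          (key3 (P a) r x y q _).symm
      _ = ((Yu (kr := kr) r x y).map (algebraMap ℂ 𝒜) * P a) ⟨r,(x,p)⟩ ⟨r,(y,q)⟩ := by
          rw [hcomm a _ (Yu_mem r x y)]
      _ = P a ⟨r,(y,p)⟩ ⟨r,(y,q)⟩ := key1 (P a) r x y p _
  -- hperp applied to matrix units orthogonal to the commutant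
  have hperp_unit : ∀ (a : Fin D) (i j : BlockIdx m nr kr),
      (∀ Y, InBlockCommutant Y → Y i j = 0) → P a i i * P a j j = 0 := by
    intro a i j h0
    have h1 : ∀ Y, InBlockCommutant Y → (Yᴴ * Matrix.single i j (1:ℂ)).trace = 0 := by
      intro Y hY
      rw [htrace, h0 Y hY, star_zero, zero_mul]
    have h2 := hperp a _ h1
    rw [hmap_std] at h2
    have h3 := congrFun (congrFun h2 i) j
    rw [htriple] at h3
    simpa using h3
  have hd_orth : ∀ (a : Fin D) (r s : Fin m) (x : Fin (nr r)) (p : Fin (kr r))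
      (y : Fin (nr s)) (q : Fin (kr s)), (⟨r,p⟩ : (t : Fin m) × Fin (kr t)) ≠ ⟨s,q⟩ →
      P a ⟨r,(x,p)⟩ ⟨r,(x,p)⟩ * P a ⟨s,(y,q)⟩ ⟨s,(y,q)⟩ = 0 := by
    intro a r s x p y q hne
    apply hperp_unit
    rintro Y ⟨B, hB⟩
    rw [hB r s x p y q]
    by_cases hrs : r = s
    · subst hrs
      rw [dif_pos rfl]
      have hpq : p ≠ q := by
        intro h
        exact hne (by rw [h])
      exact if_neg hpq
    · exact dif_neg hrs
  -- the quadratic relation k_r • d² = d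
  have hkd : ∀ (a : Fin D) (r : Fin m) (x : Fin (nr r)) (p : Fin (kr r)),
      (kr r) • (P a ⟨r,(x,p)⟩ ⟨r,(x,p)⟩ * P a ⟨r,(x,p)⟩ ⟨r,(x,p)⟩)
        = ∑ t : Fin (kr r), P a ⟨r,(x,p)⟩ ⟨r,(x,t)⟩ * P a ⟨r,(x,t)⟩ ⟨r,(x,p)⟩ := by
    intro a r x p
    have hX : ∀ Y, InBlockCommutant Y →
        (Yᴴ * (∑ t : Fin (kr r), (Matrix.single (⟨r,(x,p)⟩ : BlockIdx m nr kr) (⟨r,(x,p)⟩ : BlockIdx m nr kr) (1:ℂ)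
          - Matrix.single (⟨r,(x,t)⟩ : BlockIdx m nr kr) (⟨r,(x,t)⟩ : BlockIdx m nr kr) 1))).trace = 0 := by
      rintro Y ⟨B, hB⟩
      have hYd : ∀ t : Fin (kr r), Y ⟨r,(x,t)⟩ ⟨r,(x,t)⟩ = B r x x := by
        intro t
        rw [hB r r x t x t, dif_pos rfl]
        exact if_pos rfl
      rw [Matrix.mul_sum, Matrix.trace_sum]
      apply Finset.sum_eq_zero
      intro t _
      rw [Matrix.mul_sub, Matrix.trace_sub, htrace, htrace, hYd, hYd, sub_self]
    have h2 := hperp a _ hX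
    have hXmap : (∑ t : Fin (kr r), (Matrix.single (⟨r,(x,p)⟩ : BlockIdx m nr kr) (⟨r,(x,p)⟩ : BlockIdx m nr kr) (1:ℂ)
          - Matrix.single (⟨r,(x,t)⟩ : BlockIdx m nr kr) (⟨r,(x,t)⟩ : BlockIdx m nr kr) 1)).map (algebraMap ℂ 𝒜)
        = ∑ t : Fin (kr r), (Matrix.single (⟨r,(x,p)⟩ : BlockIdx m nr kr) (⟨r,(x,p)⟩ : BlockIdx m nr kr) (1:𝒜)
          - Matrix.single (⟨r,(x,t)⟩ : BlockIdx m nr kr) (⟨r,(x,t)⟩ : BlockIdx m nr kr) 1) := by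
      ext u v
      simp only [Matrix.map_apply, Matrix.sum_apply, Matrix.sub_apply, map_sum, map_sub,
        Matrix.single, Matrix.of_apply, apply_ite (algebraMap ℂ 𝒜), _root_.map_one, _root_.map_zero]
    rw [hXmap, Matrix.mul_sum, Matrix.sum_mul] at h2
    have h3 := congrFun (congrFun h2 ⟨r,(x,p)⟩) ⟨r,(x,p)⟩
    rw [Matrix.sum_apply] at h3
    have h4 : ∀ t : Fin (kr r),
        ((P a * (Matrix.single (⟨r,(x,p)⟩ : BlockIdx m nr kr) (⟨r,(x,p)⟩ : BlockIdx m nr kr) (1:𝒜)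
          - Matrix.single (⟨r,(x,t)⟩ : BlockIdx m nr kr) (⟨r,(x,t)⟩ : BlockIdx m nr kr) 1) * P a :
          Matrix (BlockIdx m nr kr) (BlockIdx m nr kr) 𝒜)) (⟨r,(x,p)⟩ : BlockIdx m nr kr) (⟨r,(x,p)⟩ : BlockIdx m nr kr)
        = P a ⟨r,(x,p)⟩ ⟨r,(x,p)⟩ * P a ⟨r,(x,p)⟩ ⟨r,(x,p)⟩
          - P a ⟨r,(x,p)⟩ ⟨r,(x,t)⟩ * P a ⟨r,(x,t)⟩ ⟨r,(x,p)⟩ := by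
      intro t
      rw [Matrix.mul_sub, Matrix.sub_mul, Matrix.sub_apply, htriple, htriple]
    rw [Finset.sum_congr rfl (fun t _ => h4 t), Finset.sum_sub_distrib, Matrix.zero_apply,
      sub_eq_zero, Finset.sum_const, Finset.card_univ, Fintype.card_fin] at h3
    exact h3
  have hself : ∀ (a : Fin D) (r : Fin m) (x : Fin (nr r)) (p : Fin (kr r)),
      ∑ t : Fin (kr r), P a ⟨r,(x,p)⟩ ⟨r,(x,t)⟩ * P a ⟨r,(x,t)⟩ ⟨r,(x,p)⟩
        = P a ⟨r,(x,p)⟩ ⟨r,(x,p)⟩ := by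
    intro a r x p
    have h := congrFun (congrFun (hidem a) ⟨r,(x,p)⟩) ⟨r,(x,p)⟩
    rw [Matrix.mul_apply] at h
    rw [← h, ← Finset.univ_sigma_univ, Finset.sum_sigma]
    symm
    calc ∑ s : Fin m, ∑ b : Fin (nr s) × Fin (kr s),
          P a ⟨r,(x,p)⟩ ⟨s,b⟩ * P a ⟨s,b⟩ ⟨r,(x,p)⟩
        = ∑ b : Fin (nr r) × Fin (kr r), P a ⟨r,(x,p)⟩ ⟨r,b⟩ * P a ⟨r,b⟩ ⟨r,(x,p)⟩ := by
          apply Fintype.sum_eq_single r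
          intro s hs
          apply Finset.sum_eq_zero
          rintro ⟨u,t⟩ -
          rw [L2a a r s x p u t (fun h' => hs h'.symm), zero_mul]
      _ = ∑ u : Fin (nr r), ∑ t : Fin (kr r),
            P a ⟨r,(x,p)⟩ ⟨r,(u,t)⟩ * P a ⟨r,(u,t)⟩ ⟨r,(x,p)⟩ := by
          rw [Fintype.sum_prod_type]
      _ = ∑ t : Fin (kr r), P a ⟨r,(x,p)⟩ ⟨r,(x,t)⟩ * P a ⟨r,(x,t)⟩ ⟨r,(x,p)⟩ := by
          apply Fintype.sum_eq_single x
          intro u hu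
          apply Finset.sum_eq_zero
          intro t _
          rw [L2b a r x u p t (Ne.symm hu), zero_mul]
  have hquad : ∀ (a : Fin D) (r : Fin m) (x : Fin (nr r)) (p : Fin (kr r)),
      (kr r) • (P a ⟨r,(x,p)⟩ ⟨r,(x,p)⟩ * P a ⟨r,(x,p)⟩ ⟨r,(x,p)⟩) = P a ⟨r,(x,p)⟩ ⟨r,(x,p)⟩ := by
    intro a r x p
    rw [hkd, hself]
  have hstar : ∀ (a : Fin D) (i : BlockIdx m nr kr), star (P a i i) = P a i i := by
    intro a i
    have h := congrFun (congrFun (hadj a) i) i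
    rwa [Matrix.conjTranspose_apply] at h
  -- the candidate trace element
  have hTT : ∀ a : Fin D,
      (∑ z : (t : Fin m) × Fin (kr t), (kr z.1 : ℂ) • P a (diagIdx hnr z) (diagIdx hnr z)) *
      (∑ z : (t : Fin m) × Fin (kr t), (kr z.1 : ℂ) • P a (diagIdx hnr z) (diagIdx hnr z))
      = ∑ z : (t : Fin m) × Fin (kr t), (kr z.1 : ℂ) • P a (diagIdx hnr z) (diagIdx hnr z) := by
    intro a
    rw [Finset.sum_mul_sum]
    apply Finset.sum_congr rfl
    intro z _
    rw [Fintype.sum_eq_single z]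
    · simp only [diagIdx]
      rw [smul_mul_smul_comm, mul_smul]
      congr 1
      rw [Nat.cast_smul_eq_nsmul, hquad a z.1 ⟨0, hnr z.1⟩ z.2]
    · intro w hw
      simp only [diagIdx]
      rw [smul_mul_smul_comm]
      have hzw : (⟨z.1, z.2⟩ : (t : Fin m) × Fin (kr t)) ≠ ⟨w.1, w.2⟩ := by
        intro h'
        apply hw
        rw [← Sigma.eta w, ← Sigma.eta z, h']
      rw [hd_orth a z.1 w.1 ⟨0, hnr z.1⟩ z.2 ⟨0, hnr w.1⟩ w.2 hzw, smul_zero]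
  have hTstar : ∀ a : Fin D,
      star (∑ z : (t : Fin m) × Fin (kr t), (kr z.1 : ℂ) • P a (diagIdx hnr z) (diagIdx hnr z))
      = ∑ z : (t : Fin m) × Fin (kr t), (kr z.1 : ℂ) • P a (diagIdx hnr z) (diagIdx hnr z) := by
    intro a
    rw [star_sum]
    apply Finset.sum_congr rfl
    intro z _
    rw [star_smul, hstar, star_natCast]
  have hTsum : ∑ a : Fin D,
      (∑ z : (t : Fin m) × Fin (kr t), (kr z.1 : ℂ) • P a (diagIdx hnr z) (diagIdx hnr z))
      = (D : ℂ) • (1 : 𝒜) := by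
    rw [Finset.sum_comm]
    calc ∑ z : (t : Fin m) × Fin (kr t), ∑ a : Fin D,
          (kr z.1 : ℂ) • P a (diagIdx hnr z) (diagIdx hnr z)
        = ∑ z : (t : Fin m) × Fin (kr t), (kr z.1 : ℂ) • (1 : 𝒜) := by
          apply Finset.sum_congr rfl
          intro z _
          rw [← Finset.smul_sum]
          congr 1
          have h := congrFun (congrFun hsum (diagIdx hnr z)) (diagIdx hnr z)
          rw [Matrix.sum_apply] at h
          rw [h, Matrix.one_apply_eq]
      _ = (∑ z : (t : Fin m) × Fin (kr t), (kr z.1 : ℂ)) • (1 : 𝒜) := by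
          rw [Finset.sum_smul]
      _ = (D : ℂ) • (1 : 𝒜) := by
          congr 1
          rw [← Finset.univ_sigma_univ, Finset.sum_sigma, hD]
          push_cast
          apply Finset.sum_congr rfl
          intro r _
          rw [Finset.sum_const, Finset.card_univ, Fintype.card_fin, nsmul_eq_mul]
          push_cast
          ring
  have hT1 : ∀ a : Fin D,
      (∑ z : (t : Fin m) × Fin (kr t), (kr z.1 : ℂ) • P a (diagIdx hnr z) (diagIdx hnr z))
      = (1 : 𝒜) := by
    have h0 : ∑ a : Fin D, ((1:𝒜) -
        ∑ z : (t : Fin m) × Fin (kr t), (kr z.1 : ℂ) • P a (diagIdx hnr z) (diagIdx hnr z)) = 0 := by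
      rw [Finset.sum_sub_distrib, hTsum, Finset.sum_const, Finset.card_univ, Fintype.card_fin,
        ← Nat.cast_smul_eq_nsmul ℂ, sub_self]
    have hone : ∀ a : Fin D, star ((1:𝒜) -
          ∑ z : (t : Fin m) × Fin (kr t), (kr z.1 : ℂ) • P a (diagIdx hnr z) (diagIdx hnr z)) *
        ((1:𝒜) - ∑ z : (t : Fin m) × Fin (kr t), (kr z.1 : ℂ) • P a (diagIdx hnr z) (diagIdx hnr z))
        = (1:𝒜) - ∑ z : (t : Fin m) × Fin (kr t), (kr z.1 : ℂ) • P a (diagIdx hnr z) (diagIdx hnr z) := by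
      intro a
      rw [star_sub, star_one, hTstar a, one_sub_mul, mul_one_sub, hTT a]
      abel
    have hher := h𝒜her D (fun a => (1:𝒜) -
        ∑ z : (t : Fin m) × Fin (kr t), (kr z.1 : ℂ) • P a (diagIdx hnr z) (diagIdx hnr z))
      (by rw [Finset.sum_congr rfl (fun a _ => hone a)]; exact h0)
    intro a
    exact (sub_eq_zero.mp (hher a)).symm
  -- conclusion
  intro a
  have hD0 : (D : ℂ) ≠ 0 := Nat.cast_ne_zero.mpr (Nat.pos_iff_ne_zero.mp a.pos)
  have hn0 : ∀ r : Fin m, (nr r : ℂ) ≠ 0 :=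
    fun r => Nat.cast_ne_zero.mpr (Nat.pos_iff_ne_zero.mp (hnr r))
  calc ∑ r : Fin m, ((kr r : ℂ) / ((nr r : ℂ) * (D : ℂ))) •
        (∑ x : Fin (nr r), ∑ p : Fin (kr r), P a ⟨r, (x, p)⟩ ⟨r, (x, p)⟩)
      = ∑ r : Fin m, ((D:ℂ)⁻¹ * (kr r : ℂ)) •
        (∑ p : Fin (kr r), P a ⟨r,(⟨0, hnr r⟩,p)⟩ ⟨r,(⟨0, hnr r⟩,p)⟩) := by
        apply Finset.sum_congr rfl
        intro r _
        have h1 : ∑ x : Fin (nr r), ∑ p : Fin (kr r), P a ⟨r, (x, p)⟩ ⟨r, (x, p)⟩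
            = (nr r) • ∑ p : Fin (kr r), P a ⟨r,(⟨0, hnr r⟩,p)⟩ ⟨r,(⟨0, hnr r⟩,p)⟩ := by
          rw [Finset.sum_congr rfl
            (fun x _ => Finset.sum_congr rfl (fun p _ => L2c a r x ⟨0, hnr r⟩ p p)),
            Finset.sum_const, Finset.card_univ, Fintype.card_fin]
        rw [h1, ← Nat.cast_smul_eq_nsmul ℂ, smul_smul]
        congr 1
        have hn' := hn0 r
        field_simp
    _ = (D:ℂ)⁻¹ • ∑ r : Fin m, (kr r : ℂ) •
        (∑ p : Fin (kr r), P a ⟨r,(⟨0, hnr r⟩,p)⟩ ⟨r,(⟨0, hnr r⟩,p)⟩) := by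
        rw [Finset.smul_sum]
        apply Finset.sum_congr rfl
        intro r _
        rw [mul_smul]
    _ = (D:ℂ)⁻¹ • (1 : 𝒜) := by
        congr 1
        have h2 : (∑ z : (t : Fin m) × Fin (kr t), (kr z.1 : ℂ) • P a (diagIdx hnr z) (diagIdx hnr z))
            = ∑ r : Fin m, (kr r : ℂ) •
              (∑ p : Fin (kr r), P a ⟨r,(⟨0, hnr r⟩,p)⟩ ⟨r,(⟨0, hnr r⟩,p)⟩) := by
          rw [← Finset.univ_sigma_univ, Finset.sum_sigma]
          apply Finset.sum_congr rfl
          intro r _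
          rw [Finset.smul_sum]
          apply Finset.sum_congr rfl
          intro p _
          simp only [diagIdx]
        rw [← h2, hT1 a]
end
end

section
/- Let M ⊆ M_n(ℂ) be a unital *-subalgebra with commutant M'. Then M is commutative if and only if there exist an integer c ≥ 1 and matrices P_1, …, P_c ∈ M_n(ℂ) such that: each P_a belongs to M, each P_a is a self-adjoint idempotent, P_a P_b = 0 for a ≠ b, Σ_{a=1}^c P_a = I_n, P_a X P_a = 0 for every X ∈ M_n(ℂ) with Tr(Y* X) = 0 for all Y ∈ M', and P_a Y P_b = 0 for every Y ∈ M' and all a ≠ b. (Equivalently: the local chromatic number χ_loc((M_n, M, M_n)) of the complete quantum graph is finite if and only if M is abelian.) -/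
open Matrix Polynomial

set_option synthInstance.maxHeartbeats 400000
set_option maxHeartbeats 1000000

namespace CQG
variable {n : ℕ}

lemma trace_star_self_eq_zero {W : Matrix (Fin n) (Fin n) ℂ}
    (h : (Wᴴ * W).trace = 0) : W = 0 := by
  have h2 : ∑ i, ∑ j, Complex.normSq (W j i) = 0 := by
    have : (Wᴴ * W).trace = ∑ i, ∑ j, (Complex.normSq (W j i) : ℂ) := by
      simp [Matrix.trace, Matrix.mul_apply, Matrix.conjTranspose_apply, Matrix.diag,
        mul_comm, Complex.normSq_eq_conj_mul_self]
    rw [this] at h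
    exact_mod_cast h
  ext i j
  have := (Finset.sum_eq_zero_iff_of_nonneg (fun i _ => Finset.sum_nonneg
    (fun j _ => Complex.normSq_nonneg _))).mp h2 j (Finset.mem_univ _)
  have := (Finset.sum_eq_zero_iff_of_nonneg (fun j _ => Complex.normSq_nonneg _)).mp
    this i (Finset.mem_univ _)
  simpa using Complex.normSq_eq_zero.mp this


noncomputable def toEuc : Matrix (Fin n) (Fin n) ℂ ≃ₗ[ℂ] EuclideanSpace ℂ (Fin n × Fin n) where
  toFun X := WithLp.toLp 2 (fun p => X p.1 p.2)
  invFun u := Matrix.of fun i j => u (i, j)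
  map_add' _ _ := rfl
  map_smul' _ _ := rfl
  left_inv _ := rfl
  right_inv _ := rfl

lemma inner_toEuc (Y X : Matrix (Fin n) (Fin n) ℂ) :
    (inner ℂ (toEuc Y) (toEuc X) : ℂ) = (Yᴴ * X).trace := by
  simp only [Matrix.trace, Matrix.diag, Matrix.mul_apply, Matrix.conjTranspose_apply]
  rw [PiLp.inner_apply, Fintype.sum_prod_type, Finset.sum_comm]
  simp [toEuc, RCLike.inner_apply, mul_comm]
  rfl

lemma mem_of_perp (S : Submodule ℂ (Matrix (Fin n) (Fin n) ℂ))
    (W : Matrix (Fin n) (Fin n) ℂ)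
    (h : ∀ Z : Matrix (Fin n) (Fin n) ℂ, (∀ Y ∈ S, (Yᴴ * Z).trace = 0) → (Zᴴ * W).trace = 0) :
    W ∈ S := by
  set T : Submodule ℂ (EuclideanSpace ℂ (Fin n × Fin n)) := S.map (toEuc (n := n) : _ ≃ₗ[ℂ] _).toLinearMap with hT
  have hWT : toEuc W ∈ Tᗮᗮ := by
    rw [Submodule.mem_orthogonal]
    intro u hu
    have hZ : ∀ Y ∈ S, (Yᴴ * (toEuc.symm u)).trace = 0 := by
      intro Y hY
      rw [← inner_toEuc]
      have hYT : toEuc Y ∈ T := Submodule.mem_map_of_mem hY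
      have := hu (toEuc Y) hYT
      simpa using this
    have := h (toEuc.symm u) hZ
    rw [← inner_toEuc] at this
    simpa using this
  rw [Submodule.orthogonal_orthogonal] at hWT
  obtain ⟨V, hV, hVW⟩ := hWT
  rwa [← toEuc.injective hVW]


lemma rank_lt_of_orth {p f : Matrix (Fin n) (Fin n) ℂ}
    (hp : p * p = p) (hf : f * f = f) (hpf : p * f = 0) (hfp : f * p = 0)
    (hfne : f ≠ 0) : p.rank < (p + f).rank := by
  set e := p + f with he
  have hrp : LinearMap.range p.mulVecLin ≤ LinearMap.range e.mulVecLin := by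
    rintro x ⟨v, rfl⟩
    refine ⟨p.mulVecLin v, ?_⟩
    simp only [mulVecLin_apply, he, Matrix.add_mulVec, ← Matrix.mulVec_mulVec]
    have h1 : p *ᵥ (p *ᵥ v) = (p * p) *ᵥ v := by rw [Matrix.mulVec_mulVec]
    have h2 : f *ᵥ (p *ᵥ v) = (f * p) *ᵥ v := by rw [Matrix.mulVec_mulVec]
    rw [h1, h2, hp, hfp]
    simp
  have hrf : LinearMap.range f.mulVecLin ≤ LinearMap.range e.mulVecLin := by
    rintro x ⟨v, rfl⟩
    refine ⟨f.mulVecLin v, ?_⟩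
    simp only [mulVecLin_apply, he, Matrix.add_mulVec]
    have h1 : p *ᵥ (f *ᵥ v) = (p * f) *ᵥ v := by rw [Matrix.mulVec_mulVec]
    have h2 : f *ᵥ (f *ᵥ v) = (f * f) *ᵥ v := by rw [Matrix.mulVec_mulVec]
    rw [h1, h2, hpf, hf]
    simp
  have hdisj : LinearMap.range p.mulVecLin ⊓ LinearMap.range f.mulVecLin = ⊥ := by
    rw [Submodule.eq_bot_iff]
    rintro x ⟨⟨v, hv⟩, ⟨w, hw⟩⟩
    have hx1 : p *ᵥ x = x := by
      rw [← hv]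
      simp only [mulVecLin_apply, Matrix.mulVec_mulVec, hp]
    have hx2 : p *ᵥ x = 0 := by
      rw [← hw]
      simp only [mulVecLin_apply, Matrix.mulVec_mulVec, hpf]
      simp
    rw [hx1] at hx2; exact hx2
  have hsum := Submodule.finrank_sup_add_finrank_inf_eq
    (LinearMap.range p.mulVecLin) (LinearMap.range f.mulVecLin)
  rw [hdisj] at hsum
  simp only [finrank_bot, add_zero] at hsum
  have hfrank : 0 < f.rank := by
    rw [Matrix.rank]
    rw [Nat.pos_iff_ne_zero]
    intro h0
    apply hfne
    have hbot : LinearMap.range f.mulVecLin = ⊥ := Submodule.finrank_eq_zero.mp h0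
    have hzero : f.mulVecLin = 0 := LinearMap.range_eq_bot.mp hbot
    ext i j
    have := congrFun (congrArg (fun g => g (Pi.single j 1)) (congrArg DFunLike.coe hzero)) i
    simpa [Matrix.mulVecLin_apply, Matrix.mulVec_single] using this
  have hle : p.rank + f.rank ≤ e.rank := by
    rw [Matrix.rank, Matrix.rank, Matrix.rank, ← hsum]
    exact Submodule.finrank_mono (sup_le hrp hrf)
  omega


lemma aeval_unitary_conj (U D : Matrix (Fin n) (Fin n) ℂ)
    (h1 : U * star U = 1) (h2 : star U * U = 1) (q : ℂ[X]) :
    Polynomial.aeval (U * D * star U) q = U * Polynomial.aeval D q * star U := by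
  let φ : Matrix (Fin n) (Fin n) ℂ →ₐ[ℂ] Matrix (Fin n) (Fin n) ℂ :=
  { toFun := fun X => U * X * star U
    map_one' := by show U * 1 * star U = 1; rw [Matrix.mul_one, h1]
    map_mul' := by
      intro X Y
      calc U * (X * Y) * star U = U * X * ((star U * U) * (Y * star U)) := by
            simp only [h2, one_mul, Matrix.mul_assoc]
        _ = U * X * star U * (U * Y * star U) := by simp only [Matrix.mul_assoc]
    map_zero' := by simp
    map_add' := by intro X Y; simp [Matrix.add_mul, Matrix.mul_add]
    commutes' := by
      intro c
      simp only [Algebra.algebraMap_eq_smul_one]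
      rw [Matrix.mul_smul, mul_one, Matrix.smul_mul, h1]
  }
  have := Polynomial.aeval_algHom_apply φ D q
  simpa [φ] using this

lemma aeval_diagonal (w : Fin n → ℂ) (q : ℂ[X]) :
    Polynomial.aeval (Matrix.diagonal w) q = Matrix.diagonal (fun i => q.eval (w i)) := by
  have h := Polynomial.aeval_algHom_apply (Matrix.diagonalAlgHom (R := ℂ)) w q
  simp only [Matrix.diagonalAlgHom_apply] at h
  have h3 : (Polynomial.aeval w) q = fun i => q.eval (w i) := by
    funext i
    have h2 := Polynomial.aeval_algHom_apply (Pi.evalAlgHom ℂ (fun _ : Fin n => ℂ) i) w q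
    simp only [Pi.evalAlgHom_apply] at h2
    rw [← h2]
    exact congrFun (Polynomial.coe_aeval_eq_eval (w i)) q
  rw [h, h3]

/-- Construction of a nontrivial subprojection from a non-scalar hermitian compression. -/
lemma exists_subprojection (M : StarSubalgebra ℂ (Matrix (Fin n) (Fin n) ℂ))
    (e : Matrix (Fin n) (Fin n) ℂ) (heM : e ∈ M) (heH : eᴴ = e) (hee : e * e = e)
    (B : Matrix (Fin n) (Fin n) ℂ) (hBM : B ∈ M) (hBH : Bᴴ = B)
    (han : ∀ μ : ℂ, e * B * e ≠ μ • e) :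
    ∃ p : Matrix (Fin n) (Fin n) ℂ, p ∈ M ∧ pᴴ = p ∧ p * p = p ∧
      e * p = p ∧ p * e = p ∧ p ≠ 0 ∧ p ≠ e := by
  set a := e * B * e with ha_def
  have haM : a ∈ M := mul_mem (mul_mem heM hBM) heM
  have haH : aᴴ = a := by
    rw [ha_def, Matrix.conjTranspose_mul, Matrix.conjTranspose_mul, heH, hBH, Matrix.mul_assoc]
  have hea : e * a = a := by rw [ha_def, ← Matrix.mul_assoc, ← Matrix.mul_assoc, hee]
  have hae : a * e = a := by rw [ha_def, Matrix.mul_assoc, Matrix.mul_assoc, hee, ← Matrix.mul_assoc]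
  have ha : a.IsHermitian := haH
  set d : Fin n → ℝ := ha.eigenvalues with hd
  set U : Matrix (Fin n) (Fin n) ℂ := (ha.eigenvectorUnitary : Matrix (Fin n) (Fin n) ℂ) with hU
  have hU2 : U ∈ Matrix.unitaryGroup (Fin n) ℂ := ha.eigenvectorUnitary.2
  have hUU : U * star U = 1 := Matrix.mem_unitaryGroup_iff.mp hU2
  have hsUU : star U * U = 1 := Matrix.mem_unitaryGroup_iff'.mp hU2
  have hspec : a = U * Matrix.diagonal (fun i => ((d i : ℝ) : ℂ)) * star U := by
    have := ha.spectral_theorem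
    rw [this, Unitary.conjStarAlgAut_apply]
    rfl
  -- a nonzero eigenvalue exists
  have hne : ∃ i, d i ≠ 0 := by
    by_contra hall
    push_neg at hall
    apply han 0
    rw [zero_smul, hspec]
    have : Matrix.diagonal (fun i => ((d i : ℝ) : ℂ)) = 0 := by
      ext i j
      by_cases hij : i = j
      · subst hij; simp [hall i]
      · simp [Matrix.diagonal_apply_ne _ hij]
    rw [this, Matrix.mul_zero, Matrix.zero_mul]

  obtain ⟨i₁, hi₁⟩ := hne
  set lam : ℂ := ((d i₁ : ℝ) : ℂ) with hlam
  have hlamne : lam ≠ 0 := by simpa [hlam] using hi₁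
  set s : Finset ℂ := insert 0 (Finset.image (fun i => ((d i : ℝ) : ℂ)) Finset.univ) with hs
  have hlam_mem : lam ∈ s := by
    rw [hs]
    exact Finset.mem_insert_of_mem (Finset.mem_image_of_mem _ (Finset.mem_univ i₁))
  have h0mem : (0 : ℂ) ∈ s := Finset.mem_insert_self _ _
  set q : ℂ[X] := Lagrange.basis s id lam with hq
  have hinj : Set.InjOn id (s : Set ℂ) := Function.injective_id.injOn
  have heval_lam : q.eval lam = 1 := by
    have := Lagrange.eval_basis_self hinj hlam_mem
    simpa [hq] using this
  have heval_ne : ∀ x ∈ s, x ≠ lam → q.eval x = 0 := by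
    intro x hx hxne
    have := Lagrange.eval_basis_of_ne (s := s) (v := id) (i := lam) (j := x) (Ne.symm hxne) hx
    simpa [hq] using this
  have heval0 : q.eval 0 = 0 := heval_ne 0 h0mem (Ne.symm hlamne)
  set v : Fin n → ℂ := fun i => q.eval ((d i : ℝ) : ℂ) with hv
  have hvmem : ∀ i, v i = 0 ∨ v i = 1 := by
    intro i
    by_cases hdi : ((d i : ℝ) : ℂ) = lam
    · right
      rw [hv]
      simp only
      rw [hdi, heval_lam]
    · left
      rw [hv]
      simp only
      refine heval_ne _ ?_ hdi
      exact Finset.mem_insert_of_mem (Finset.mem_image_of_mem _ (Finset.mem_univ i))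
  set p := Polynomial.aeval a q with hp
  have hconjmul : ∀ D D' : Matrix (Fin n) (Fin n) ℂ,
      (U * D * star U) * (U * D' * star U) = U * (D * D') * star U := by
    intro D D'
    calc (U * D * star U) * (U * D' * star U)
        = U * D * ((star U * U) * (D' * star U)) := by simp only [Matrix.mul_assoc]
      _ = U * (D * D') * star U := by rw [hsUU, one_mul]; simp only [Matrix.mul_assoc]
  have hpM : p ∈ M := by
    have h := Polynomial.aeval_algHom_apply M.subtype (⟨a, haM⟩ : M) q
    have h2 : M.subtype (⟨a, haM⟩ : M) = a := rfl
    rw [h2] at h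
    rw [hp, h]
    exact SetLike.coe_mem _
  have hpU : p = U * Matrix.diagonal v * star U := by
    rw [hp, hspec, aeval_unitary_conj U _ hUU hsUU, aeval_diagonal]
  have hvstar : (fun i => star (v i)) = v := by
    funext i
    rcases hvmem i with h | h <;> rw [h] <;> simp
  have hpH : pᴴ = p := by
    rw [← Matrix.star_eq_conjTranspose, hpU, Matrix.star_mul, Matrix.star_mul, star_star]
    have hDv : star (Matrix.diagonal v) = Matrix.diagonal v := by
      rw [Matrix.star_eq_conjTranspose, Matrix.diagonal_conjTranspose]
      show Matrix.diagonal (fun i => star (v i)) = Matrix.diagonal v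
      rw [hvstar]
    rw [hDv, Matrix.mul_assoc]
  have hpp : p * p = p := by
    rw [hpU, hconjmul, Matrix.diagonal_mul_diagonal]
    have hvv : (fun i => v i * v i) = v := by
      funext i
      rcases hvmem i with h | h <;> rw [h] <;> ring
    rw [hvv]
  obtain ⟨r, hr⟩ : Polynomial.X ∣ q :=
    Polynomial.X_dvd_iff.mpr (by rw [Polynomial.coeff_zero_eq_eval_zero]; exact heval0)
  have hpar : p = a * Polynomial.aeval a r := by
    rw [hp, hr, _root_.map_mul, Polynomial.aeval_X]
  have hpra : p = Polynomial.aeval a r * a := by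
    rw [hp, hr, mul_comm Polynomial.X r, _root_.map_mul, Polynomial.aeval_X]
  have hep : e * p = p := by
    rw [hpar, ← Matrix.mul_assoc, hea]
  have hpe : p * e = p := by
    rw [hpra, Matrix.mul_assoc, hae]
  have hdit : ((d i₁ : ℝ) : ℂ) = lam := rfl
  have hvone : v i₁ = 1 := by rw [hv]; simp only; rw [hdit, heval_lam]
  have hpne0 : p ≠ 0 := by
    intro h0
    have hD : Matrix.diagonal v = star U * p * U := by
      rw [hpU]
      calc Matrix.diagonal v
          = (star U * U) * Matrix.diagonal v * (star U * U) := by rw [hsUU]; simp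
        _ = star U * (U * Matrix.diagonal v * star U) * U := by simp only [Matrix.mul_assoc]
    rw [h0] at hD
    simp only [Matrix.mul_zero, Matrix.zero_mul] at hD
    have := congrFun (congrFun hD i₁) i₁
    rw [Matrix.diagonal_apply_eq] at this
    rw [hvone] at this
    simp at this
  have hpnee : p ≠ e := by
    intro hpeq
    have hap : a * p = lam • p := by
      rw [hpU, hspec, hconjmul, Matrix.diagonal_mul_diagonal]
      have : (fun i => ((d i : ℝ) : ℂ) * v i) = fun i => lam * v i := by
        funext i
        by_cases hdi : ((d i : ℝ) : ℂ) = lam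
        · rw [hdi]
        · have : v i = 0 := by
            rw [hv]
            simp only
            refine heval_ne _ ?_ hdi
            exact Finset.mem_insert_of_mem (Finset.mem_image_of_mem _ (Finset.mem_univ i))
          rw [this, mul_zero, mul_zero]
      rw [this]
      have hdsmul : Matrix.diagonal (fun i => lam * v i) = lam • Matrix.diagonal v := by
        rw [← Matrix.diagonal_smul]
        rfl
      rw [hdsmul, Matrix.mul_smul, Matrix.smul_mul]
    apply han lam
    have : a = a * p := by rw [hpeq, hae]
    rw [this, hap, hpeq]
  exact ⟨p, hpM, hpH, hpp, hep, hpe, hpne0, hpnee⟩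



lemma decomp (M : StarSubalgebra ℂ (Matrix (Fin n) (Fin n) ℂ))
    (hcomm : ∀ x ∈ M, ∀ y ∈ M, x * y = y * x) :
    ∀ r : ℕ, ∀ e : Matrix (Fin n) (Fin n) ℂ, e ∈ M → eᴴ = e → e * e = e → e.rank ≤ r →
    ∃ c : ℕ, 1 ≤ c ∧ ∃ P : Fin c → Matrix (Fin n) (Fin n) ℂ,
      (∀ a, P a ∈ M) ∧ (∀ a, (P a)ᴴ = P a) ∧ (∀ a, P a * P a = P a) ∧
      (∀ a b, a ≠ b → P a * P b = 0) ∧ (∑ a, P a = e) ∧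
      (∀ a, ∀ A ∈ M, ∃ μ : ℂ, P a * A = μ • P a ∧ A * P a = μ • P a) := by
  intro r
  induction r using Nat.strong_induction_on with
  | _ r IH =>
  intro e heM heH hee her
  by_cases hcase : ∀ A ∈ M, ∃ μ : ℂ, e * A * e = μ • e
  · -- base case: the compression is scalar
    refine ⟨1, le_refl 1, fun _ => e, fun _ => heM, fun _ => heH, fun _ => hee, ?_, ?_, ?_⟩
    · intro a b hab
      exact absurd (Subsingleton.elim a b) hab
    · simp
    · intro a A hA
      obtain ⟨μ, hμ⟩ := hcase A hA
      have h1 : e * A = e * A * e := by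
        rw [Matrix.mul_assoc, hcomm A hA e heM, ← Matrix.mul_assoc, hee]
      have h2 : A * e = e * A := (hcomm A hA e heM).symm ▸ rfl
      refine ⟨μ, ?_, ?_⟩
      · show e * A = μ • e
        rw [h1, hμ]
      · show A * e = μ • e
        rw [hcomm A hA e heM, h1, hμ]
  · -- find a hermitian element with non-scalar compression
    push_neg at hcase
    obtain ⟨A₀, hA₀M, hA₀⟩ := hcase
    have hB : ∃ B ∈ M, Bᴴ = B ∧ ∀ μ : ℂ, e * B * e ≠ μ • e := by
      by_cases h1 : ∀ μ : ℂ, e * (A₀ + A₀ᴴ) * e ≠ μ • e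
      · exact ⟨A₀ + A₀ᴴ, add_mem hA₀M (star_mem hA₀M), by
          rw [Matrix.conjTranspose_add, Matrix.conjTranspose_conjTranspose, add_comm], h1⟩
      · push_neg at h1
        obtain ⟨μ₁, hμ₁⟩ := h1
        refine ⟨Complex.I • (A₀ - A₀ᴴ), SMulMemClass.smul_mem _ (sub_mem hA₀M (star_mem hA₀M)), ?_, ?_⟩
        · rw [Matrix.conjTranspose_smul, Matrix.conjTranspose_sub,
            Matrix.conjTranspose_conjTranspose]
          rw [Complex.star_def, Complex.conj_I]
          rw [neg_smul, smul_sub, smul_sub]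
          rw [neg_sub]
        · intro μ₂ hμ₂
          apply hA₀ ((μ₁ + Complex.I⁻¹ * μ₂) / 2)
          have hsm : e * (Complex.I • (A₀ - A₀ᴴ)) * e = Complex.I • (e * (A₀ - A₀ᴴ) * e) := by
            rw [Matrix.mul_smul, Matrix.smul_mul]
          have expand : e * A₀ * e =
              (2 : ℂ)⁻¹ • (e * (A₀ + A₀ᴴ) * e)
                + ((2 : ℂ)⁻¹ * Complex.I⁻¹) • (e * (Complex.I • (A₀ - A₀ᴴ)) * e) := by
            rw [hsm, smul_smul]
            have hc : (2:ℂ)⁻¹ * Complex.I⁻¹ * Complex.I = (2:ℂ)⁻¹ := by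
              field_simp
            rw [hc, Matrix.mul_add, Matrix.add_mul, Matrix.mul_sub, Matrix.sub_mul]
            module
          rw [expand, hμ₁, hμ₂, smul_smul, smul_smul, ← add_smul]
          congr 1
          field_simp
    obtain ⟨B, hBM, hBH, hBn⟩ := hB
    obtain ⟨p, hpM, hpH, hpp, hep, hpe, hpne0, hpnee⟩ :=
      exists_subprojection M e heM heH hee B hBM hBH hBn
    set f := e - p with hf_def
    have hfM : f ∈ M := sub_mem heM hpM
    have hfH : fᴴ = f := by rw [hf_def, Matrix.conjTranspose_sub, heH, hpH]
    have hpf : p * f = 0 := by rw [hf_def, Matrix.mul_sub, hpe, hpp, sub_self]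
    have hfp : f * p = 0 := by rw [hf_def, Matrix.sub_mul, hep, hpp, sub_self]
    have hff : f * f = f := by
      rw [hf_def, Matrix.sub_mul, Matrix.mul_sub, Matrix.mul_sub, hee, hep, hpe, hpp]
      simp
    have hfne : f ≠ 0 := by
      rw [hf_def]
      exact sub_ne_zero.mpr (Ne.symm hpnee)
    have hpef : p + f = e := by rw [hf_def]; abel
    have hrankp : p.rank < e.rank := by
      have := rank_lt_of_orth hpp hff hpf hfp hfne
      rwa [hpef] at this
    have hrankf : f.rank < e.rank := by
      have := rank_lt_of_orth hff hpp hfp hpf hpne0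
      have hfpe : f + p = e := by rw [add_comm]; exact hpef
      rwa [hfpe] at this
    obtain ⟨c₁, hc₁, P₁, hP₁M, hP₁H, hP₁I, hP₁O, hP₁S, hP₁sc⟩ :=
      IH p.rank (lt_of_lt_of_le hrankp her) p hpM hpH hpp le_rfl
    obtain ⟨c₂, hc₂, P₂, hP₂M, hP₂H, hP₂I, hP₂O, hP₂S, hP₂sc⟩ :=
      IH f.rank (lt_of_lt_of_le hrankf her) f hfM hfH hff le_rfl
    have hP₁p : ∀ a, P₁ a * p = P₁ a := by
      intro a
      rw [← hP₁S, Finset.mul_sum]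
      rw [Finset.sum_eq_single a (fun b _ hba => hP₁O a b (Ne.symm hba))
        (fun h => absurd (Finset.mem_univ a) h)]
      exact hP₁I a
    have hpP₁ : ∀ a, p * P₁ a = P₁ a := by
      intro a
      rw [← hP₁S, Finset.sum_mul]
      rw [Finset.sum_eq_single a (fun b _ hba => hP₁O b a hba)
        (fun h => absurd (Finset.mem_univ a) h)]
      exact hP₁I a
    have hP₂f : ∀ a, P₂ a * f = P₂ a := by
      intro a
      rw [← hP₂S, Finset.mul_sum]
      rw [Finset.sum_eq_single a (fun b _ hba => hP₂O a b (Ne.symm hba))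
        (fun h => absurd (Finset.mem_univ a) h)]
      exact hP₂I a
    have hfP₂ : ∀ a, f * P₂ a = P₂ a := by
      intro a
      rw [← hP₂S, Finset.sum_mul]
      rw [Finset.sum_eq_single a (fun b _ hba => hP₂O b a hba)
        (fun h => absurd (Finset.mem_univ a) h)]
      exact hP₂I a
    have hcross : ∀ a b, P₁ a * P₂ b = 0 := by
      intro a b
      calc P₁ a * P₂ b = (P₁ a * p) * (f * P₂ b) := by rw [hP₁p a, hfP₂ b]
        _ = P₁ a * (p * f) * P₂ b := by simp only [Matrix.mul_assoc]
        _ = 0 := by rw [hpf, Matrix.mul_zero, Matrix.zero_mul]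
    have hcross' : ∀ a b, P₂ b * P₁ a = 0 := by
      intro a b
      calc P₂ b * P₁ a = (P₂ b * f) * (p * P₁ a) := by rw [hP₂f b, hpP₁ a]
        _ = P₂ b * (f * p) * P₁ a := by simp only [Matrix.mul_assoc]
        _ = 0 := by rw [hfp, Matrix.mul_zero, Matrix.zero_mul]
    refine ⟨c₁ + c₂, by omega, Fin.append P₁ P₂, ?_, ?_, ?_, ?_, ?_, ?_⟩
    · intro a
      refine Fin.addCases (fun i => ?_) (fun i => ?_) a
      · rw [Fin.append_left]; exact hP₁M i
      · rw [Fin.append_right]; exact hP₂M i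
    · intro a
      refine Fin.addCases (fun i => ?_) (fun i => ?_) a
      · rw [Fin.append_left]; exact hP₁H i
      · rw [Fin.append_right]; exact hP₂H i
    · intro a
      refine Fin.addCases (fun i => ?_) (fun i => ?_) a
      · rw [Fin.append_left]; exact hP₁I i
      · rw [Fin.append_right]; exact hP₂I i
    · intro a
      refine Fin.addCases (fun i => ?_) (fun i => ?_) a
      · refine Fin.addCases (fun j hij => ?_) (fun j hij => ?_)
        · rw [Fin.append_left, Fin.append_left]
          refine hP₁O i j (fun hij' => hij ?_)
          rw [hij']
        · rw [Fin.append_left, Fin.append_right]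
          exact hcross i j
      · refine Fin.addCases (fun j hij => ?_) (fun j hij => ?_)
        · rw [Fin.append_right, Fin.append_left]
          exact hcross' j i
        · rw [Fin.append_right, Fin.append_right]
          refine hP₂O i j (fun hij' => hij ?_)
          rw [hij']
    · rw [Fin.sum_univ_add]
      simp only [Fin.append_left, Fin.append_right]
      rw [hP₁S, hP₂S, hpef]
    · intro a
      refine Fin.addCases (fun i => ?_) (fun i => ?_) a
      · rw [Fin.append_left]; exact hP₁sc i
      · rw [Fin.append_right]; exact hP₂sc i


/-- The commutant of M as a submodule. -/
noncomputable def commSub (M : StarSubalgebra ℂ (Matrix (Fin n) (Fin n) ℂ)) :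
    Submodule ℂ (Matrix (Fin n) (Fin n) ℂ) where
  carrier := {Y | ∀ A ∈ M, Y * A = A * Y}
  add_mem' := by
    intro a b ha hb A hA
    simp [add_mul, mul_add, ha A hA, hb A hA]
  zero_mem' := by intro A hA; simp
  smul_mem' := by
    intro c x hx A hA
    simp [Matrix.smul_mul, Matrix.mul_smul, hx A hA]

theorem backward (M : StarSubalgebra ℂ (Matrix (Fin n) (Fin n) ℂ))
    (c : ℕ) (P : Fin c → Matrix (Fin n) (Fin n) ℂ)
    (hPM : ∀ a, P a ∈ M)
    (hPaH : ∀ a, (P a)ᴴ = P a)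
    (hPid : ∀ a, P a * P a = P a)
    (hSum : ∑ a, P a = 1)
    (h6 : ∀ (a : Fin c) (X : Matrix (Fin n) (Fin n) ℂ),
          (∀ Y : Matrix (Fin n) (Fin n) ℂ, (∀ A ∈ M, Y * A = A * Y) → (Yᴴ * X).trace = 0) →
          P a * X * P a = 0) :
    ∀ x ∈ M, ∀ y ∈ M, x * y = y * x := by
  -- each compression P a * X * P a lies in the commutant
  have key : ∀ (a : Fin c) (X : Matrix (Fin n) (Fin n) ℂ), P a * X * P a ∈ commSub M := by
    intro a X
    apply mem_of_perp
    intro Z hZ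
    have hZperp : ∀ Y : Matrix (Fin n) (Fin n) ℂ, (∀ A ∈ M, Y * A = A * Y) →
        (Yᴴ * Z).trace = 0 := fun Y hY => hZ Y hY
    have hPZ : P a * Z * P a = 0 := h6 a Z hZperp
    have hPa : (P a)ᴴ = P a := hPaH a
    have hconj : P a * Zᴴ * P a = 0 := by
      have := congrArg Matrix.conjTranspose hPZ
      simpa [Matrix.conjTranspose_mul, Matrix.mul_assoc, hPa] using this
    calc (Zᴴ * (P a * X * P a)).trace = ((Zᴴ * P a * X) * P a).trace := by
          simp [Matrix.mul_assoc]
      _ = (P a * (Zᴴ * P a * X)).trace := by rw [Matrix.trace_mul_comm]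
      _ = ((P a * Zᴴ * P a) * X).trace := by simp [Matrix.mul_assoc]
      _ = 0 := by rw [hconj]; simp
  -- each P a commutes with M
  have hPcomm : ∀ a, P a ∈ commSub M := by
    intro a
    have := key a 1
    simpa [hPid a] using this
  intro x hx y hy
  have hxc : x ∈ commSub M := by
    have hxsum : x = ∑ a, P a * x * P a := by
      calc x = x * (∑ a, P a) := by rw [hSum]; simp
        _ = ∑ a, x * P a := by rw [Finset.mul_sum]
        _ = ∑ a, P a * x * P a := by
            apply Finset.sum_congr rfl
            intro a _
            rw [← hPcomm a x hx, Matrix.mul_assoc, ← hPcomm a x hx, ← Matrix.mul_assoc, hPid a]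
    rw [hxsum]
    exact Submodule.sum_mem _ (fun a _ => key a x)
  exact hxc y hy


end CQG

/-- **Theorem (local colorability of complete quantum graphs).**  Let `M ⊆ M_n(ℂ)` be a unital
*-subalgebra with commutant `M'`.  Then `M` is commutative if and only if there exist `c ≥ 1`
and matrices `P_1, …, P_c ∈ M` which are mutually orthogonal self-adjoint idempotents summing
to `I_n`, with `P_a X P_a = 0` for every `X ⊥ M'` (Frobenius inner product) and
`P_a Y P_b = 0` for every `Y ∈ M'` and `a ≠ b`.  Equivalently, the local chromatic number
`χ_loc((M_n, M, M_n))` of the complete quantum graph is finite iff `M` is abelian. -/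
theorem complete_quantum_graph_loc_colorable_iff_abelian {n : ℕ}
    (M : StarSubalgebra ℂ (Matrix (Fin n) (Fin n) ℂ)) :
    (∀ x ∈ M, ∀ y ∈ M, x * y = y * x) ↔
    ∃ c : ℕ, 1 ≤ c ∧
      ∃ P : Fin c → Matrix (Fin n) (Fin n) ℂ,
        (∀ a, P a ∈ M) ∧
        (∀ a, (P a)ᴴ = P a) ∧
        (∀ a, P a * P a = P a) ∧
        (∀ a b, a ≠ b → P a * P b = 0) ∧
        (∑ a, P a = 1) ∧
        (∀ (a : Fin c) (X : Matrix (Fin n) (Fin n) ℂ),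
          (∀ Y : Matrix (Fin n) (Fin n) ℂ, (∀ A ∈ M, Y * A = A * Y) → (Yᴴ * X).trace = 0) →
          P a * X * P a = 0) ∧
        (∀ a b, a ≠ b → ∀ Y : Matrix (Fin n) (Fin n) ℂ, (∀ A ∈ M, Y * A = A * Y) →
          P a * Y * P b = 0) := by
  constructor
  · -- forward direction: commutative implies colorable
    intro hcomm
    obtain ⟨c, hc, P, hPM, hPH, hPI, hPO, hPS, hPsc⟩ :=
      CQG.decomp M hcomm (1 : Matrix (Fin n) (Fin n) ℂ).rank 1 (one_mem M)
        (Matrix.conjTranspose_one) (one_mul 1) le_rfl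
    refine ⟨c, hc, P, hPM, hPH, hPI, hPO, hPS, ?_, ?_⟩
    · -- condition (6)
      intro a X hX
      set W := P a * X * P a with hW
      have hcollapse : ∀ Y : Matrix (Fin n) (Fin n) ℂ, P a * (P a * Y) = P a * Y := by
        intro Y
        rw [← Matrix.mul_assoc, hPI a]
      have hWcomm : ∀ A ∈ M, W * A = A * W := by
        intro A hA
        obtain ⟨μ, h1, h2⟩ := hPsc a A hA
        calc W * A = P a * X * (P a * A) := by rw [hW, Matrix.mul_assoc]
          _ = P a * X * (μ • P a) := by rw [h1]
          _ = μ • W := by rw [Matrix.mul_smul, hW]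
          _ = (μ • P a) * X * P a := by rw [hW, Matrix.smul_mul, Matrix.smul_mul]
          _ = (A * P a) * X * P a := by rw [h2]
          _ = A * W := by rw [hW]; simp only [Matrix.mul_assoc]
      have t1 : (Wᴴ * X).trace = 0 := hX W hWcomm
      have hWH : Wᴴ = P a * Xᴴ * P a := by
        rw [hW]
        simp only [Matrix.conjTranspose_mul, hPH a, Matrix.mul_assoc]
      have hWW : (Wᴴ * W).trace = 0 := by
        have key : Wᴴ * W = Wᴴ * X * P a := by
          rw [hWH, hW]
          simp only [Matrix.mul_assoc, hcollapse]
        have hPWH : P a * Wᴴ = Wᴴ := by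
          rw [hWH]
          simp only [← Matrix.mul_assoc, hPI a]
        calc (Wᴴ * W).trace = (Wᴴ * X * P a).trace := by rw [key]
          _ = (P a * (Wᴴ * X)).trace := by rw [Matrix.trace_mul_comm]
          _ = ((P a * Wᴴ) * X).trace := by rw [Matrix.mul_assoc]
          _ = (Wᴴ * X).trace := by rw [hPWH]
          _ = 0 := t1
      exact CQG.trace_star_self_eq_zero hWW
    · -- condition (7)
      intro a b hab Y hY
      calc P a * Y * P b = Y * P a * P b := by rw [hY (P a) (hPM a)]
        _ = Y * (P a * P b) := by rw [Matrix.mul_assoc]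
        _ = 0 := by rw [hPO a b hab, Matrix.mul_zero]
  · -- backward direction
    rintro ⟨c, hc, P, hPM, hPaH, hPid, hPO, hSum, h6, h7⟩
    exact CQG.backward M c P hPM hPaH hPid hSum h6
end
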